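/- arXiv:math/0405027 — 4 statements merged into one kernel-verified Lean document; each statement's English description precedes it below -/
import Mathlib

section
/- Let k be a field, O a discrete valuation ring with maximal ideal m and residue field containing k, n ≥ 1, and B a k-algebra. Suppose the composite K := O/m → O/mⁿ → O/m is the identity (i.e. O/mⁿ contains a coefficient field K). Then the quotient group (O/mⁿ ⊗_k B)^* / (K ⊗_k B)^* is isomorphic to W^{n-1}_{K ⊗_k B}, via the map sending (x₁,…,x_{n-1}) ∈ W^{n-1}_{K⊗B} to 1 + Σ_{h=1}^{n-1} t̄ₚʰ · xₕ, where tₚ is a uniformizer of O. -/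
open scoped TensorProduct
open scoped Classical

/-- The Witt-type addition `cᵢ = aᵢ + bᵢ + Σ_{h+k=i, h,k≥1} aₕbₖ` on `R^n`
(coordinates indexed `1,…,n` via `Fin n`, `i ↦ i+1`). -/
def wittOp {R : Type*} [CommRing R] {n : ℕ} (a b : Fin n → R) : Fin n → R :=
  fun i => a i + b i +
    ∑ p ∈ Finset.univ.filter
      (fun p : Fin n × Fin n => (p.1.val + 1) + (p.2.val + 1) = i.val + 1),
      a p.1 * b p.2

section

variable (k : Type*) [Field k] (O : Type*) [CommRing O] [IsDomain O]
  [IsDiscreteValuationRing O] [Algebra k O] (n : ℕ) (tp : O)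
  (B : Type*) [CommRing B] [Algebra k B]
  (s : (O ⧸ IsLocalRing.maximalIdeal O) →ₐ[k] (O ⧸ (IsLocalRing.maximalIdeal O) ^ n))

/-- The element `1 + Σ_{h=1}^{n-1} t̄ₚʰ · xₕ` of `(O/mⁿ) ⊗_k B`, where
`x : W^{n-1}_{K ⊗_k B}` and the coefficients `xₕ ∈ K ⊗_k B` are embedded via the
coefficient-field section `s`. -/
noncomputable def wittToUnitElem
    (x : Fin (n - 1) → ((O ⧸ IsLocalRing.maximalIdeal O) ⊗[k] B)) :
    (O ⧸ (IsLocalRing.maximalIdeal O) ^ n) ⊗[k] B :=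
  1 + ∑ h : Fin (n - 1),
    ((Ideal.Quotient.mk ((IsLocalRing.maximalIdeal O) ^ n) tp ^ (h.val + 1)) ⊗ₜ[k] (1 : B)) *
      (Algebra.TensorProduct.map s (AlgHom.id k B)) (x h)

/-- The subgroup `(K ⊗_k B)^*` of `((O/mⁿ) ⊗_k B)^*`, i.e. the image of the units of
`K ⊗_k B` under the coefficient-field embedding. -/
noncomputable def coeffFieldUnits :
    Subgroup ((O ⧸ (IsLocalRing.maximalIdeal O) ^ n) ⊗[k] B)ˣ :=
  (Units.map (Algebra.TensorProduct.map s (AlgHom.id k B)).toRingHom.toMonoidHom).range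

instance : (coeffFieldUnits k O n B s).Normal := by
  constructor
  intro a ha g
  have h : g * a * g⁻¹ = a := by
    rw [mul_comm g a, mul_assoc]
    simp
  rwa [h]

/-- The map `W^{n-1}_{K ⊗_k B} → ((O/mⁿ) ⊗_k B)^* / (K ⊗_k B)^*`,
`x ↦ [1 + Σ_{h=1}^{n-1} t̄ₚʰ · xₕ]` (junk value `1` if the element were not a unit). -/
noncomputable def wittToQuot
    (x : Fin (n - 1) → ((O ⧸ IsLocalRing.maximalIdeal O) ⊗[k] B)) :
    ((O ⧸ (IsLocalRing.maximalIdeal O) ^ n) ⊗[k] B)ˣ ⧸ coeffFieldUnits k O n B s :=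
  if h : IsUnit (wittToUnitElem k O n tp B s x) then QuotientGroup.mk h.unit else 1



section Aux1
variable {k : Type*} [Field k] {O : Type*} [CommRing O] [IsDomain O]
  [IsDiscreteValuationRing O] [Algebra k O] {n : ℕ} {tp : O}

lemma tp_mem (htp : Irreducible tp) : tp ∈ IsLocalRing.maximalIdeal O := by
  rw [htp.maximalIdeal_eq]; exact Ideal.mem_span_singleton_self tp

lemma tbar_pow_eq_zero (htp : Irreducible tp) :
    (Ideal.Quotient.mk ((IsLocalRing.maximalIdeal O) ^ n) tp) ^ n = 0 := by
  rw [← map_pow, Ideal.Quotient.eq_zero_iff_mem]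
  exact Ideal.pow_mem_pow (tp_mem htp) n

lemma tbar_pow_eq_zero' (htp : Irreducible tp) {j : ℕ} (hj : n ≤ j) :
    (Ideal.Quotient.mk ((IsLocalRing.maximalIdeal O) ^ n) tp) ^ j = 0 := by
  rw [← Nat.sub_add_cancel hj, pow_add, tbar_pow_eq_zero htp, mul_zero]

lemma tbar_cancel (hn : 0 < n) (htp : Irreducible tp)
    (z : O ⧸ (IsLocalRing.maximalIdeal O) ^ n)
    (hz : Ideal.Quotient.mk _ tp * z = 0) :
    ∃ w, z = (Ideal.Quotient.mk _ tp) ^ (n - 1) * w := by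
  obtain ⟨c, rfl⟩ := Ideal.Quotient.mk_surjective z
  rw [← map_mul, Ideal.Quotient.eq_zero_iff_mem, htp.maximalIdeal_eq,
    Ideal.span_singleton_pow, Ideal.mem_span_singleton] at hz
  obtain ⟨d, hd⟩ := hz
  have hc : c = tp ^ (n - 1) * d := by
    apply mul_left_cancel₀ htp.ne_zero
    rw [hd, ← mul_assoc, ← pow_succ', Nat.sub_add_cancel hn]
  exact ⟨Ideal.Quotient.mk _ d, by rw [hc, map_mul, map_pow]⟩

/-- kernel of factor is generated by tbar -/
lemma mem_span_tbar (hn : 0 < n) (htp : Irreducible tp)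
    (z : O ⧸ (IsLocalRing.maximalIdeal O) ^ n)
    (hz : Ideal.Quotient.factor (Ideal.pow_le_self hn.ne') z = 0) :
    ∃ w, z = Ideal.Quotient.mk _ tp * w := by
  obtain ⟨c, rfl⟩ := Ideal.Quotient.mk_surjective z
  rw [Ideal.Quotient.factor_mk, Ideal.Quotient.eq_zero_iff_mem, htp.maximalIdeal_eq,
    Ideal.mem_span_singleton] at hz
  obtain ⟨d, rfl⟩ := hz
  exact ⟨Ideal.Quotient.mk _ d, by rw [map_mul]⟩

lemma factor_tbar (hn : 0 < n) (htp : Irreducible tp) :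
    Ideal.Quotient.factor (Ideal.pow_le_self hn.ne')
      (Ideal.Quotient.mk ((IsLocalRing.maximalIdeal O) ^ n) tp) = 0 := by
  rw [Ideal.Quotient.factor_mk, Ideal.Quotient.eq_zero_iff_mem]
  exact tp_mem htp

end Aux1

section Aux2
variable {k : Type*} [Field k] {O : Type*} [CommRing O] [IsDomain O]
  [IsDiscreteValuationRing O] [Algebra k O] {n : ℕ} {tp : O}
  (s : (O ⧸ IsLocalRing.maximalIdeal O) →ₐ[k] (O ⧸ (IsLocalRing.maximalIdeal O) ^ n))

lemma expand_surj_aux (hn : 0 < n) (htp : Irreducible tp)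
    (hs : ∀ x : O ⧸ IsLocalRing.maximalIdeal O,
      Ideal.Quotient.factor (Ideal.pow_le_self hn.ne') (s x) = x)
    (j : ℕ) (z : O ⧸ (IsLocalRing.maximalIdeal O) ^ n) :
    ∃ (a : ℕ → O ⧸ IsLocalRing.maximalIdeal O) (v : O ⧸ (IsLocalRing.maximalIdeal O) ^ n),
      z = (∑ i ∈ Finset.range j, s (a i) * (Ideal.Quotient.mk _ tp) ^ i)
        + (Ideal.Quotient.mk _ tp) ^ j * v := by
  induction j with
  | zero => exact ⟨0, z, by simp⟩
  | succ j ih =>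
    obtain ⟨a, v, hv⟩ := ih
    set q := Ideal.Quotient.factor (S := (IsLocalRing.maximalIdeal O) ^ n) (T := IsLocalRing.maximalIdeal O) (Ideal.pow_le_self hn.ne')
    obtain ⟨w, hw⟩ := mem_span_tbar hn htp (v - s (q v)) (by rw [map_sub, hs, sub_self])
    refine ⟨Function.update a j (q v), w, ?_⟩
    rw [Finset.sum_range_succ, Function.update_self]
    have hv' : v = s (q v) + Ideal.Quotient.mk _ tp * w := by
      rw [← hw]; ring
    calc z = (∑ i ∈ Finset.range j, s (a i) * (Ideal.Quotient.mk _ tp) ^ i)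
          + (Ideal.Quotient.mk _ tp) ^ j * (s (q v) + Ideal.Quotient.mk _ tp * w) := by
            rw [← hv', hv]
      _ = _ := by
          have hupd : ∑ i ∈ Finset.range j,
              s (Function.update a j (q v) i) * (Ideal.Quotient.mk _ tp) ^ i
              = ∑ i ∈ Finset.range j, s (a i) * (Ideal.Quotient.mk _ tp) ^ i :=
            Finset.sum_congr rfl (fun i hi => by
              rw [Function.update_of_ne (Finset.mem_range.mp hi).ne])
          rw [hupd]; ring

lemma expand_surj (hn : 0 < n) (htp : Irreducible tp)
    (hs : ∀ x : O ⧸ IsLocalRing.maximalIdeal O,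
      Ideal.Quotient.factor (Ideal.pow_le_self hn.ne') (s x) = x)
    (z : O ⧸ (IsLocalRing.maximalIdeal O) ^ n) :
    ∃ a : Fin n → O ⧸ IsLocalRing.maximalIdeal O,
      z = ∑ i : Fin n, s (a i) * (Ideal.Quotient.mk _ tp) ^ (i : ℕ) := by
  obtain ⟨a, v, hv⟩ := expand_surj_aux s hn htp hs n z
  refine ⟨fun i => a i, ?_⟩
  rw [hv, tbar_pow_eq_zero htp, zero_mul, add_zero,
    Fin.sum_univ_eq_sum_range (fun i => s (a i) * (Ideal.Quotient.mk _ tp) ^ i)]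

lemma expand_inj_aux (hn : 0 < n) (htp : Irreducible tp)
    (hs : ∀ x : O ⧸ IsLocalRing.maximalIdeal O,
      Ideal.Quotient.factor (Ideal.pow_le_self hn.ne') (s x) = x)
    (j : ℕ) (hj : j ≤ n) :
    ∀ (a : ℕ → O ⧸ IsLocalRing.maximalIdeal O) (w : O ⧸ (IsLocalRing.maximalIdeal O) ^ n),
      (∑ i ∈ Finset.range j, s (a i) * (Ideal.Quotient.mk _ tp) ^ i)
        = (Ideal.Quotient.mk _ tp) ^ j * w → ∀ i < j, a i = 0 := by
  induction j with
  | zero => intro a w h i hi; omega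
  | succ j ih =>
    intro a w h i hi
    set q := Ideal.Quotient.factor (S := (IsLocalRing.maximalIdeal O) ^ n) (T := IsLocalRing.maximalIdeal O)
      (Ideal.pow_le_self hn.ne') with hq
    have ha0 : a 0 = 0 := by
      have := congrArg q h
      rw [map_mul, map_pow, map_sum] at this
      simp only [map_mul, map_pow, hs] at this
      have hq0 : q (Ideal.Quotient.mk ((IsLocalRing.maximalIdeal O) ^ n) tp) = 0 := factor_tbar hn htp
      rw [hq0] at this
      rwa [zero_pow (Nat.succ_ne_zero j), zero_mul, Finset.sum_eq_single 0
        (fun b _ hb => by rw [zero_pow hb, mul_zero])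
        (fun h0 => absurd (Finset.mem_range.mpr (Nat.succ_pos j)) h0),
        pow_zero, mul_one] at this
    -- rewrite the sum pulling out t
    have hsum : (Ideal.Quotient.mk ((IsLocalRing.maximalIdeal O) ^ n) tp) *
        ((∑ i ∈ Finset.range j, s (a (i + 1)) * (Ideal.Quotient.mk _ tp) ^ i)
          - (Ideal.Quotient.mk _ tp) ^ j * w) = 0 := by
      rw [mul_sub, Finset.mul_sum]
      have h1 : ∑ i ∈ Finset.range j, (Ideal.Quotient.mk ((IsLocalRing.maximalIdeal O) ^ n) tp) *
          (s (a (i + 1)) * (Ideal.Quotient.mk _ tp) ^ i)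
          = ∑ i ∈ Finset.range (j + 1), s (a i) * (Ideal.Quotient.mk _ tp) ^ i := by
        rw [Finset.sum_range_succ' (fun i => s (a i) * (Ideal.Quotient.mk _ tp) ^ i) j,
          ha0, map_zero, zero_mul, add_zero]
        exact Finset.sum_congr rfl (fun i _ => by ring)
      rw [h1, h, pow_succ']
      ring
    obtain ⟨v, hv⟩ := tbar_cancel hn htp _ hsum
    have hj' : j ≤ n - 1 := by omega
    have hmain : (∑ i ∈ Finset.range j, s (a (i + 1)) * (Ideal.Quotient.mk _ tp) ^ i)
        = (Ideal.Quotient.mk ((IsLocalRing.maximalIdeal O) ^ n) tp) ^ j *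
          (w + (Ideal.Quotient.mk _ tp) ^ (n - 1 - j) * v) := by
      have : (Ideal.Quotient.mk ((IsLocalRing.maximalIdeal O) ^ n) tp) ^ (n - 1)
          = (Ideal.Quotient.mk _ tp) ^ j * (Ideal.Quotient.mk _ tp) ^ (n - 1 - j) := by
        rw [← pow_add, Nat.add_sub_cancel' hj']
      have h2 := sub_eq_iff_eq_add.mp hv
      rw [h2, this]; ring
    have := ih (Nat.le_of_succ_le hj) (fun i => a (i + 1)) _ hmain
    rcases Nat.eq_zero_or_pos i with rfl | hi0
    · exact ha0
    · obtain ⟨i', rfl⟩ := Nat.exists_eq_succ_of_ne_zero hi0.ne'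
      exact this i' (by omega)


lemma expand_inj (hn : 0 < n) (htp : Irreducible tp)
    (hs : ∀ x : O ⧸ IsLocalRing.maximalIdeal O,
      Ideal.Quotient.factor (Ideal.pow_le_self hn.ne') (s x) = x)
    (a : Fin n → O ⧸ IsLocalRing.maximalIdeal O)
    (h : ∑ i : Fin n, s (a i) * (Ideal.Quotient.mk _ tp) ^ (i : ℕ) = 0) :
    a = 0 := by
  classical
  set a' : ℕ → O ⧸ IsLocalRing.maximalIdeal O :=
    fun i => if h : i < n then a ⟨i, h⟩ else 0 with ha'
  have h' : (∑ i ∈ Finset.range n, s (a' i) * (Ideal.Quotient.mk _ tp) ^ i)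
      = (Ideal.Quotient.mk ((IsLocalRing.maximalIdeal O) ^ n) tp) ^ n * 0 := by
    rw [mul_zero, ← h, ← Fin.sum_univ_eq_sum_range
      (fun i => s (a' i) * (Ideal.Quotient.mk _ tp) ^ i)]
    exact Finset.sum_congr rfl (fun i _ => by simp [ha'])
  have hall := expand_inj_aux s hn htp hs n le_rfl a' 0 h'
  funext i
  have := hall i i.isLt
  simpa [ha'] using this


end Aux2

section Aux3

variable {k : Type*} [Field k] {O : Type*} [CommRing O] [IsDomain O]
  [IsDiscreteValuationRing O] [Algebra k O] {n : ℕ}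
  (tp : O)
  (s : (O ⧸ IsLocalRing.maximalIdeal O) →ₐ[k] (O ⧸ (IsLocalRing.maximalIdeal O) ^ n))

noncomputable def psiMap :
    (Fin n → (O ⧸ IsLocalRing.maximalIdeal O)) →ₗ[k] (O ⧸ (IsLocalRing.maximalIdeal O) ^ n) where
  toFun := fun a => ∑ i : Fin n, s (a i) * (Ideal.Quotient.mk _ tp) ^ (i : ℕ)
  map_add' := fun a b => by
    simp only [Pi.add_apply, map_add, add_mul, Finset.sum_add_distrib]
  map_smul' := fun c a => by
    simp only [Pi.smul_apply, map_smul, RingHom.id_apply, Finset.smul_sum, smul_mul_assoc]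

lemma psiMap_apply (a : Fin n → (O ⧸ IsLocalRing.maximalIdeal O)) :
    psiMap tp s a = ∑ i : Fin n, s (a i) * (Ideal.Quotient.mk _ tp) ^ (i : ℕ) := rfl

lemma psiMap_single (j : Fin n) (a : O ⧸ IsLocalRing.maximalIdeal O) :
    psiMap tp s (Pi.single j a) = s a * (Ideal.Quotient.mk _ tp) ^ (j : ℕ) := by
  rw [psiMap_apply, Finset.sum_eq_single j
    (fun b _ hb => by rw [Pi.single_eq_of_ne hb, map_zero, zero_mul])
    (fun h => absurd (Finset.mem_univ j) h), Pi.single_eq_same]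

variable {tp}

lemma psiMap_bijective (hn : 0 < n) (htp : Irreducible tp)
    (hs : ∀ x : O ⧸ IsLocalRing.maximalIdeal O,
      Ideal.Quotient.factor (Ideal.pow_le_self hn.ne') (s x) = x) :
    Function.Bijective (psiMap tp s) := by
  constructor
  · rw [injective_iff_map_eq_zero]
    intro a ha
    exact expand_inj s hn htp hs a ha
  · intro z
    obtain ⟨a, ha⟩ := expand_surj s hn htp hs z
    exact ⟨a, ha.symm⟩

/-- coefficient functionals -/
noncomputable def coeffMap (hn : 0 < n) (htp : Irreducible tp)
    (hs : ∀ x : O ⧸ IsLocalRing.maximalIdeal O,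
      Ideal.Quotient.factor (Ideal.pow_le_self hn.ne') (s x) = x) (i : Fin n) :
    (O ⧸ (IsLocalRing.maximalIdeal O) ^ n) →ₗ[k] (O ⧸ IsLocalRing.maximalIdeal O) :=
  (LinearMap.proj i) ∘ₗ (LinearEquiv.ofBijective (psiMap tp s)
    (psiMap_bijective s hn htp hs)).symm.toLinearMap

lemma coeffMap_psi (hn : 0 < n) (htp : Irreducible tp)
    (hs : ∀ x : O ⧸ IsLocalRing.maximalIdeal O,
      Ideal.Quotient.factor (Ideal.pow_le_self hn.ne') (s x) = x)
    (a : Fin n → (O ⧸ IsLocalRing.maximalIdeal O)) (i : Fin n) :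
    coeffMap s hn htp hs i (psiMap tp s a) = a i := by
  unfold coeffMap
  have : (LinearEquiv.ofBijective (psiMap tp s) (psiMap_bijective s hn htp hs)).symm
      (psiMap tp s a) = a := by
    exact (LinearEquiv.ofBijective (psiMap tp s) (psiMap_bijective s hn htp hs)).symm_apply_apply a
  simp [this]

lemma coeffMap_single (hn : 0 < n) (htp : Irreducible tp)
    (hs : ∀ x : O ⧸ IsLocalRing.maximalIdeal O,
      Ideal.Quotient.factor (Ideal.pow_le_self hn.ne') (s x) = x)
    (j : Fin n) (a : O ⧸ IsLocalRing.maximalIdeal O) (i : Fin n) :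
    coeffMap s hn htp hs i (s a * (Ideal.Quotient.mk _ tp) ^ (j : ℕ)) = (Pi.single j a : Fin n → O ⧸ IsLocalRing.maximalIdeal O) i := by
  rw [← psiMap_single tp s j a, coeffMap_psi]

end Aux3

section Aux4
variable {k : Type*} [Field k] {O : Type*} [CommRing O] [IsDomain O]
  [IsDiscreteValuationRing O] [Algebra k O] {n : ℕ} {tp : O}
  {B : Type*} [CommRing B] [Algebra k B]
  (s : (O ⧸ IsLocalRing.maximalIdeal O) →ₐ[k] (O ⧸ (IsLocalRing.maximalIdeal O) ^ n))

lemma core_coeff (hn : 0 < n) (htp : Irreducible tp)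
    (hs : ∀ x : O ⧸ IsLocalRing.maximalIdeal O,
      Ideal.Quotient.factor (Ideal.pow_le_self hn.ne') (s x) = x)
    (j i : Fin n) (v : (O ⧸ IsLocalRing.maximalIdeal O) ⊗[k] B) :
    LinearMap.rTensor B (coeffMap s hn htp hs i)
      ((((Ideal.Quotient.mk ((IsLocalRing.maximalIdeal O) ^ n) tp) ^ (j : ℕ)) ⊗ₜ[k] (1 : B)) *
        (Algebra.TensorProduct.map s (AlgHom.id k B)) v)
      = (Pi.single j v : Fin n → (O ⧸ IsLocalRing.maximalIdeal O) ⊗[k] B) i := by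
  induction v with
  | zero => simp
  | tmul a b =>
    rw [Algebra.TensorProduct.map_tmul, AlgHom.coe_id, id_eq,
      Algebra.TensorProduct.tmul_mul_tmul, one_mul, mul_comm, LinearMap.rTensor_tmul,
      coeffMap_single s hn htp hs j a i]
    rcases eq_or_ne i j with rfl | hij
    · rw [Pi.single_eq_same, Pi.single_eq_same]
    · rw [Pi.single_eq_of_ne hij, Pi.single_eq_of_ne hij, TensorProduct.zero_tmul]
  | add v w hv hw =>
    rw [map_add, mul_add, map_add, hv, hw, Pi.single_add, Pi.add_apply]

lemma tensor_expand (hn : 0 < n) (htp : Irreducible tp)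
    (hs : ∀ x : O ⧸ IsLocalRing.maximalIdeal O,
      Ideal.Quotient.factor (Ideal.pow_le_self hn.ne') (s x) = x)
    (u : (O ⧸ (IsLocalRing.maximalIdeal O) ^ n) ⊗[k] B) :
    u = ∑ i : Fin n,
      (((Ideal.Quotient.mk ((IsLocalRing.maximalIdeal O) ^ n) tp) ^ (i : ℕ)) ⊗ₜ[k] (1 : B)) *
        (Algebra.TensorProduct.map s (AlgHom.id k B))
          (LinearMap.rTensor B (coeffMap s hn htp hs i) u) := by
  induction u with
  | zero => simp
  | tmul z b =>
    obtain ⟨a, rfl⟩ := expand_surj s hn htp hs z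
    have key : ∀ i : Fin n, LinearMap.rTensor B (coeffMap s hn htp hs i)
        ((∑ i : Fin n, s (a i) * (Ideal.Quotient.mk _ tp) ^ (i : ℕ)) ⊗ₜ[k] b)
        = (a i) ⊗ₜ[k] b := by
      intro i
      rw [LinearMap.rTensor_tmul, ← psiMap_apply, coeffMap_psi]
    simp only [key, Algebra.TensorProduct.map_tmul, AlgHom.coe_id, id_eq,
      Algebra.TensorProduct.tmul_mul_tmul, one_mul]
    rw [TensorProduct.sum_tmul]
    exact Finset.sum_congr rfl (fun i _ => by rw [mul_comm])
  | add v w hv hw =>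
    conv_lhs => rw [hv, hw]
    rw [← Finset.sum_add_distrib]
    exact Finset.sum_congr rfl (fun i _ => by rw [map_add, map_add, mul_add])

lemma tensor_unique (hn : 0 < n) (htp : Irreducible tp)
    (hs : ∀ x : O ⧸ IsLocalRing.maximalIdeal O,
      Ideal.Quotient.factor (Ideal.pow_le_self hn.ne') (s x) = x)
    (c : Fin n → (O ⧸ IsLocalRing.maximalIdeal O) ⊗[k] B)
    (hc : ∑ j : Fin n,
      (((Ideal.Quotient.mk ((IsLocalRing.maximalIdeal O) ^ n) tp) ^ (j : ℕ)) ⊗ₜ[k] (1 : B)) *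
        (Algebra.TensorProduct.map s (AlgHom.id k B)) (c j) = 0) :
    c = 0 := by
  funext i
  have h1 : LinearMap.rTensor B (coeffMap s hn htp hs i)
      (∑ j : Fin n,
        (((Ideal.Quotient.mk ((IsLocalRing.maximalIdeal O) ^ n) tp) ^ (j : ℕ)) ⊗ₜ[k] (1 : B)) *
          (Algebra.TensorProduct.map s (AlgHom.id k B)) (c j)) = c i := by
    rw [map_sum]
    rw [Finset.sum_congr rfl (fun j _ => core_coeff s hn htp hs j i (c j))]
    rw [← Finset.sum_apply, Finset.univ_sum_single]
  rw [hc, map_zero] at h1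
  exact h1.symm ▸ rfl
end Aux4

section Aux5
variable {k : Type*} [Field k] {O : Type*} [CommRing O] [IsDomain O]
  [IsDiscreteValuationRing O] [Algebra k O] {n : ℕ} {tp : O}
  {B : Type*} [CommRing B] [Algebra k B]
  (s : (O ⧸ IsLocalRing.maximalIdeal O) →ₐ[k] (O ⧸ (IsLocalRing.maximalIdeal O) ^ n))

noncomputable def qAlg (k : Type*) [Field k] (O : Type*) [CommRing O] [IsLocalRing O] [Algebra k O]
    {n : ℕ} (hn : 0 < n) :
    (O ⧸ (IsLocalRing.maximalIdeal O) ^ n) →ₐ[k] (O ⧸ IsLocalRing.maximalIdeal O) :=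
  { Ideal.Quotient.factor (S := (IsLocalRing.maximalIdeal O) ^ n) (T := IsLocalRing.maximalIdeal O)
      (Ideal.pow_le_self hn.ne') with
    commutes' := fun r => by
      simp only [RingHom.toMonoidHom_eq_coe, OneHom.toFun_eq_coe, MonoidHom.toOneHom_coe,
        MonoidHom.coe_coe]
      rw [← Ideal.Quotient.mk_algebraMap, Ideal.Quotient.factor_mk, Ideal.Quotient.mk_algebraMap] }

lemma qAlg_apply (hn : 0 < n) (z : O ⧸ (IsLocalRing.maximalIdeal O) ^ n) :
    qAlg k O hn z = Ideal.Quotient.factor (S := (IsLocalRing.maximalIdeal O) ^ n)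
      (T := IsLocalRing.maximalIdeal O) (Ideal.pow_le_self hn.ne') z := rfl

lemma qT_sB (hn : 0 < n)
    (hs : ∀ x : O ⧸ IsLocalRing.maximalIdeal O,
      Ideal.Quotient.factor (Ideal.pow_le_self hn.ne') (s x) = x)
    (v : (O ⧸ IsLocalRing.maximalIdeal O) ⊗[k] B) :
    Algebra.TensorProduct.map (qAlg k O hn) (AlgHom.id k B)
      ((Algebra.TensorProduct.map s (AlgHom.id k B)) v) = v := by
  induction v with
  | zero => simp
  | tmul a b => simp [qAlg_apply, hs]
  | add v w hv hw => rw [map_add, map_add, hv, hw]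

lemma qT_tpow (hn : 0 < n) (htp : Irreducible tp) (j : ℕ) :
    Algebra.TensorProduct.map (qAlg k O hn) (AlgHom.id k B)
      (((Ideal.Quotient.mk ((IsLocalRing.maximalIdeal O) ^ n) tp) ^ (j + 1)) ⊗ₜ[k] (1 : B))
      = 0 := by
  rw [Algebra.TensorProduct.map_tmul, map_pow, qAlg_apply, factor_tbar hn htp,
    zero_pow (Nat.succ_ne_zero j), TensorProduct.zero_tmul]

lemma wittToUnitElem_isUnit (hn : 0 < n) (htp : Irreducible tp)
    (x : Fin (n - 1) → ((O ⧸ IsLocalRing.maximalIdeal O) ⊗[k] B)) :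
    IsUnit (wittToUnitElem k O n tp B s x) := by
  unfold wittToUnitElem
  rw [add_comm]
  apply IsNilpotent.isUnit_add_one
  have hfac : (∑ h : Fin (n - 1),
      ((Ideal.Quotient.mk ((IsLocalRing.maximalIdeal O) ^ n) tp ^ (h.val + 1)) ⊗ₜ[k] (1 : B)) *
        (Algebra.TensorProduct.map s (AlgHom.id k B)) (x h))
      = ((Ideal.Quotient.mk ((IsLocalRing.maximalIdeal O) ^ n) tp) ⊗ₜ[k] (1 : B)) *
        (∑ h : Fin (n - 1),
          ((Ideal.Quotient.mk ((IsLocalRing.maximalIdeal O) ^ n) tp ^ h.val) ⊗ₜ[k] (1 : B)) *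
            (Algebra.TensorProduct.map s (AlgHom.id k B)) (x h)) := by
    rw [Finset.mul_sum]
    exact Finset.sum_congr rfl (fun h _ => by
      rw [← mul_assoc, Algebra.TensorProduct.tmul_mul_tmul, one_mul, ← pow_succ'])
  rw [hfac]
  have hnil : IsNilpotent
      (((Ideal.Quotient.mk ((IsLocalRing.maximalIdeal O) ^ n) tp) ⊗ₜ[k] (1 : B))) := by
    refine ⟨n, ?_⟩
    rw [Algebra.TensorProduct.tmul_pow, one_pow, tbar_pow_eq_zero htp,
      TensorProduct.zero_tmul]
  exact (Commute.all _ _).isNilpotent_mul_right hnil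

end Aux5

section Aux6
variable {k : Type*} [Field k] {O : Type*} [CommRing O] [IsDomain O]
  [IsDiscreteValuationRing O] [Algebra k O] {n : ℕ} {tp : O}
  {B : Type*} [CommRing B] [Algebra k B]
  (s : (O ⧸ IsLocalRing.maximalIdeal O) →ₐ[k] (O ⧸ (IsLocalRing.maximalIdeal O) ^ n))

lemma wittElem_mul (hn : 0 < n) (htp : Irreducible tp)
    (x y : Fin (n - 1) → ((O ⧸ IsLocalRing.maximalIdeal O) ⊗[k] B)) :
    wittToUnitElem k O n tp B s (wittOp x y) =
      wittToUnitElem k O n tp B s x * wittToUnitElem k O n tp B s y := by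
  classical
  set R := (O ⧸ (IsLocalRing.maximalIdeal O) ^ n) with hR
  set sB := Algebra.TensorProduct.map s (AlgHom.id k B) with hsB
  set T : ℕ → R ⊗[k] B := fun v =>
    ((Ideal.Quotient.mk ((IsLocalRing.maximalIdeal O) ^ n) tp) ^ v) ⊗ₜ[k] (1 : B) with hT
  have hTmul : ∀ a b : ℕ, T a * T b = T (a + b) := fun a b => by
    rw [hT]
    simp only []
    rw [Algebra.TensorProduct.tmul_mul_tmul, one_mul, ← pow_add]
  have hTzero : ∀ v : ℕ, n ≤ v → T v = 0 := fun v hv => by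
    rw [hT]
    simp only []
    rw [tbar_pow_eq_zero' htp hv, TensorProduct.zero_tmul]
  set φ : Fin (n-1) × Fin (n-1) → ℕ := fun p => p.1.val + p.2.val + 1 with hφ
  set g : Fin (n-1) × Fin (n-1) → R ⊗[k] B := fun p =>
    T (φ p + 1) * sB (x p.1 * y p.2) with hg
  -- expand both sides
  unfold wittToUnitElem wittOp
  rw [← hsB]
  have lhs_eq : (1 : R ⊗[k] B) + ∑ h : Fin (n-1),
      T (h.val + 1) * sB (x h + y h +
        ∑ p ∈ Finset.univ.filter
          (fun p : Fin (n-1) × Fin (n-1) => (p.1.val + 1) + (p.2.val + 1) = h.val + 1),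
          x p.1 * y p.2)
      = 1 + ((∑ h : Fin (n-1), T (h.val + 1) * sB (x h)) +
        (∑ h : Fin (n-1), T (h.val + 1) * sB (y h)) +
        ∑ h : Fin (n-1), ∑ p ∈ Finset.univ.filter
          (fun p : Fin (n-1) × Fin (n-1) => φ p = h.val), g p) := by
    congr 1
    rw [← Finset.sum_add_distrib, ← Finset.sum_add_distrib]
    refine Finset.sum_congr rfl (fun h _ => ?_)
    rw [map_add, map_add, mul_add, mul_add, map_sum, Finset.mul_sum]
    congr 1
    have hfe : Finset.univ.filter
        (fun p : Fin (n-1) × Fin (n-1) => (p.1.val + 1) + (p.2.val + 1) = h.val + 1)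
        = Finset.univ.filter (fun p : Fin (n-1) × Fin (n-1) => φ p = h.val) := by
      apply Finset.filter_congr
      intro p _
      rw [hφ]
      simp only []
      constructor <;> intro hh <;> omega
    rw [hfe]
    refine Finset.sum_congr rfl (fun p hp => ?_)
    have hpv : φ p = h.val := (Finset.mem_filter.mp hp).2
    rw [hg]
    simp only []
    rw [hpv]
  rw [lhs_eq]
  -- RHS expansion
  have rhs_eq : ((1 : R ⊗[k] B) + ∑ h : Fin (n-1), T (h.val + 1) * sB (x h)) *
      (1 + ∑ h : Fin (n-1), T (h.val + 1) * sB (y h))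
      = 1 + ((∑ h : Fin (n-1), T (h.val + 1) * sB (x h)) +
        (∑ h : Fin (n-1), T (h.val + 1) * sB (y h)) +
        ∑ p : Fin (n-1) × Fin (n-1), g p) := by
    have hprod : (∑ h : Fin (n-1), T (h.val + 1) * sB (x h)) *
        (∑ h : Fin (n-1), T (h.val + 1) * sB (y h)) = ∑ p : Fin (n-1) × Fin (n-1), g p := by
      rw [Finset.sum_mul_sum, ← Finset.sum_product']
      refine Finset.sum_congr rfl (fun p _ => ?_)
      have harg : (p.1.val + 1) + (p.2.val + 1) = φ p + 1 := by simp only [hφ]; omega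
      calc T (p.1.val + 1) * sB (x p.1) * (T (p.2.val + 1) * sB (y p.2))
          = (T (p.1.val + 1) * T (p.2.val + 1)) * (sB (x p.1) * sB (y p.2)) := by ring
        _ = g p := by rw [hTmul, harg, ← map_mul]
    rw [mul_add, mul_one, add_mul, one_mul, hprod]
    ring
  rw [rhs_eq]
  -- remaining: fiberwise sum equality
  congr 2
  have hsplit := Finset.sum_filter_add_sum_filter_not
    (Finset.univ : Finset (Fin (n-1) × Fin (n-1))) (fun p => φ p < n - 1) g
  have hvanish : ∑ p ∈ Finset.univ.filter (fun p => ¬ (φ p < n - 1)), g p = 0 := by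
    refine Finset.sum_eq_zero (fun p hp => ?_)
    have : ¬ (φ p < n - 1) := (Finset.mem_filter.mp hp).2
    rw [hg]
    simp only []
    rw [hTzero (φ p + 1) (by omega), zero_mul]
  rw [← hsplit, hvanish, add_zero]
  -- now: ∑ h : Fin (n-1), ∑ p ∈ filter (φ = h), g = ∑ p ∈ filter (φ < n-1), g
  rw [Fin.sum_univ_eq_sum_range (fun v => ∑ p ∈ Finset.univ.filter
    (fun p : Fin (n-1) × Fin (n-1) => φ p = v), g p) (n-1)]
  rw [← Finset.sum_fiberwise_of_maps_to (g := φ) (t := Finset.range (n-1))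
    (fun p hp => Finset.mem_range.mpr (Finset.mem_filter.mp hp).2) g]
  refine Finset.sum_congr rfl (fun v hv => ?_)
  have hv' : v < n - 1 := Finset.mem_range.mp hv
  congr 1
  rw [Finset.filter_filter]
  apply Finset.filter_congr
  intro p _
  constructor
  · intro h; exact ⟨by omega, h⟩
  · intro h; exact h.2
end Aux6

section Aux7
variable {k : Type*} [Field k] {O : Type*} [CommRing O] [IsDomain O]
  [IsDiscreteValuationRing O] [Algebra k O] {n : ℕ} {tp : O}
  {B : Type*} [CommRing B] [Algebra k B]
  (s : (O ⧸ IsLocalRing.maximalIdeal O) →ₐ[k] (O ⧸ (IsLocalRing.maximalIdeal O) ^ n))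

lemma fin_sum_split {n : ℕ} {M : Type*} [AddCommMonoid M] (hn : 0 < n) (f : ℕ → M) :
    ∑ i : Fin n, f i.val = f 0 + ∑ h : Fin (n - 1), f (h.val + 1) := by
  rw [Fin.sum_univ_eq_sum_range f n,
    show (Finset.range n) = Finset.range ((n - 1) + 1) from by rw [Nat.sub_add_cancel hn],
    Finset.sum_range_succ' f (n - 1),
    ← Fin.sum_univ_eq_sum_range (fun i => f (i + 1)) (n - 1), add_comm]

lemma qT_wittElem (hn : 0 < n) (htp : Irreducible tp)
    (x : Fin (n - 1) → ((O ⧸ IsLocalRing.maximalIdeal O) ⊗[k] B)) :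
    Algebra.TensorProduct.map (qAlg k O hn) (AlgHom.id k B)
      (wittToUnitElem k O n tp B s x) = 1 := by
  unfold wittToUnitElem
  rw [map_add, map_one, map_sum]
  rw [Finset.sum_eq_zero (fun h _ => by
    rw [map_mul, qT_tpow hn htp h.val, zero_mul]), add_zero]

end Aux7

set_option maxHeartbeats 2000000 in
/-- Let `O` be a discrete valuation ring over a field `k` with uniformizer `tₚ`,
maximal ideal `m`, residue field `K = O/m`, let `n ≥ 1`, let `B` be a `k`-algebra, and
suppose `s : K → O/mⁿ` is a coefficient field (a section of the projection `O/mⁿ → K`).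
Then the map `W^{n-1}_{K ⊗_k B} → ((O/mⁿ) ⊗_k B)^* / (K ⊗_k B)^*` sending
`(x₁,…,x_{n-1})` to the class of `1 + Σ_{h=1}^{n-1} t̄ₚʰ · xₕ` is a group isomorphism:
each such element is a unit, and the map is bijective and sends the Witt operation to
multiplication. -/
theorem quotient_units_iso_witt (hn : 0 < n) (htp : Irreducible tp)
    (hs : ∀ x : O ⧸ IsLocalRing.maximalIdeal O,
      Ideal.Quotient.factor (Ideal.pow_le_self hn.ne') (s x) = x) :
    (∀ x : Fin (n - 1) → ((O ⧸ IsLocalRing.maximalIdeal O) ⊗[k] B),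
      IsUnit (wittToUnitElem k O n tp B s x)) ∧
    Function.Bijective (wittToQuot k O n tp B s) ∧
    (∀ x y : Fin (n - 1) → ((O ⧸ IsLocalRing.maximalIdeal O) ⊗[k] B),
      wittToQuot k O n tp B s (wittOp x y) =
        wittToQuot k O n tp B s x * wittToQuot k O n tp B s y) := by
  classical
  have hU : ∀ x : Fin (n - 1) → ((O ⧸ IsLocalRing.maximalIdeal O) ⊗[k] B),
      IsUnit (wittToUnitElem k O n tp B s x) :=
    fun x => wittToUnitElem_isUnit s hn htp x
  refine ⟨hU, ⟨?_, ?_⟩, ?_⟩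
  · -- injectivity
    intro x y hxy
    unfold wittToQuot at hxy
    rw [dif_pos (hU x), dif_pos (hU y), QuotientGroup.eq] at hxy
    unfold coeffFieldUnits at hxy
    rw [MonoidHom.mem_range] at hxy
    obtain ⟨c, hc⟩ := hxy
    have hc2 : (hU x).unit * Units.map
        (Algebra.TensorProduct.map s (AlgHom.id k B)).toRingHom.toMonoidHom c
        = (hU y).unit := by rw [hc, mul_inv_cancel_left]
    have hel : wittToUnitElem k O n tp B s x *
        (Algebra.TensorProduct.map s (AlgHom.id k B)) (c : _) =
        wittToUnitElem k O n tp B s y := by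
      have := congrArg Units.val hc2
      simpa using this
    have hc1 : ((c : ((O ⧸ IsLocalRing.maximalIdeal O) ⊗[k] B)ˣ) :
        (O ⧸ IsLocalRing.maximalIdeal O) ⊗[k] B) = 1 := by
      have := congrArg (Algebra.TensorProduct.map (qAlg k O hn) (AlgHom.id k B)) hel
      rw [map_mul, qT_wittElem s hn htp x, qT_wittElem s hn htp y, one_mul, qT_sB s hn hs] at this
      exact this
    rw [hc1, map_one, mul_one] at hel
    -- now extract coefficients
    have hsub : ∑ h : Fin (n - 1),
        ((Ideal.Quotient.mk ((IsLocalRing.maximalIdeal O) ^ n) tp ^ (h.val + 1)) ⊗ₜ[k] (1 : B)) *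
          (Algebra.TensorProduct.map s (AlgHom.id k B)) (x h - y h) = 0 := by
      unfold wittToUnitElem at hel
      have h2 := add_left_cancel hel
      calc ∑ h : Fin (n - 1),
          ((Ideal.Quotient.mk ((IsLocalRing.maximalIdeal O) ^ n) tp ^ (h.val + 1)) ⊗ₜ[k] (1 : B)) *
            (Algebra.TensorProduct.map s (AlgHom.id k B)) (x h - y h)
          = (∑ h : Fin (n - 1),
          ((Ideal.Quotient.mk ((IsLocalRing.maximalIdeal O) ^ n) tp ^ (h.val + 1)) ⊗ₜ[k] (1 : B)) *
            (Algebra.TensorProduct.map s (AlgHom.id k B)) (x h)) - (∑ h : Fin (n - 1),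
          ((Ideal.Quotient.mk ((IsLocalRing.maximalIdeal O) ^ n) tp ^ (h.val + 1)) ⊗ₜ[k] (1 : B)) *
            (Algebra.TensorProduct.map s (AlgHom.id k B)) (y h)) := by
            rw [← Finset.sum_sub_distrib]
            exact Finset.sum_congr rfl (fun h _ => by rw [map_sub, mul_sub])
        _ = 0 := by rw [h2, sub_self]
    set x' : ℕ → (O ⧸ IsLocalRing.maximalIdeal O) ⊗[k] B :=
      fun v => if hv : v < n - 1 then x ⟨v, hv⟩ else 0 with hx'
    set y' : ℕ → (O ⧸ IsLocalRing.maximalIdeal O) ⊗[k] B :=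
      fun v => if hv : v < n - 1 then y ⟨v, hv⟩ else 0 with hy'
    set c'' : ℕ → (O ⧸ IsLocalRing.maximalIdeal O) ⊗[k] B :=
      fun v => if v = 0 then 0 else x' (v - 1) - y' (v - 1) with hc''
    have hzero : ∑ i : Fin n,
        (((Ideal.Quotient.mk ((IsLocalRing.maximalIdeal O) ^ n) tp) ^ (i : ℕ)) ⊗ₜ[k] (1 : B)) *
          (Algebra.TensorProduct.map s (AlgHom.id k B)) (c'' i.val) = 0 := by
      rw [Fin.sum_univ_eq_sum_range (fun v =>
        (((Ideal.Quotient.mk ((IsLocalRing.maximalIdeal O) ^ n) tp) ^ v) ⊗ₜ[k] (1 : B)) *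
          (Algebra.TensorProduct.map s (AlgHom.id k B)) (c'' v)) n]
      rw [show (Finset.range n) = Finset.range ((n - 1) + 1) from by rw [Nat.sub_add_cancel hn],
        Finset.sum_range_succ' _ (n - 1)]
      have h0 : c'' 0 = 0 := by simp [hc'']
      rw [h0, map_zero, mul_zero, add_zero]
      rw [← Fin.sum_univ_eq_sum_range (fun i =>
        (((Ideal.Quotient.mk ((IsLocalRing.maximalIdeal O) ^ n) tp) ^ (i + 1)) ⊗ₜ[k] (1 : B)) *
          (Algebra.TensorProduct.map s (AlgHom.id k B)) (c'' (i + 1))) (n - 1)]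
      rw [← hsub]
      refine Finset.sum_congr rfl (fun h _ => ?_)
      have : c'' (h.val + 1) = x h - y h := by
        simp only [hc'', hx', hy', Nat.add_sub_cancel]
        rw [if_neg (Nat.succ_ne_zero h.val), dif_pos h.isLt, dif_pos h.isLt]
      rw [this]
    have hcz := tensor_unique s hn htp hs (fun i => c'' i.val) hzero
    funext h
    have h1 : c'' (h.val + 1) = 0 := by
      have := congrFun hcz ⟨h.val + 1, by omega⟩
      exact this
    have : x h - y h = 0 := by
      rw [← h1]
      simp only [hc'', hx', hy', Nat.add_sub_cancel]
      rw [if_neg (Nat.succ_ne_zero h.val), dif_pos h.isLt, dif_pos h.isLt]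
    exact sub_eq_zero.mp this
  · -- surjectivity
    intro u
    obtain ⟨U, rfl⟩ := QuotientGroup.mk'_surjective (coeffFieldUnits k O n B s) u
    set C : Fin n → (O ⧸ IsLocalRing.maximalIdeal O) ⊗[k] B :=
      fun i => LinearMap.rTensor B (coeffMap s hn htp hs i)
        ((U : ((O ⧸ (IsLocalRing.maximalIdeal O) ^ n) ⊗[k] B))) with hCdef
    have hexp := tensor_expand s hn htp hs
      (U : ((O ⧸ (IsLocalRing.maximalIdeal O) ^ n) ⊗[k] B))
    set F : ℕ → ((O ⧸ (IsLocalRing.maximalIdeal O) ^ n) ⊗[k] B) :=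
      fun v => if hv : v < n then
        (((Ideal.Quotient.mk ((IsLocalRing.maximalIdeal O) ^ n) tp) ^ v) ⊗ₜ[k] (1 : B)) *
          (Algebra.TensorProduct.map s (AlgHom.id k B)) (C ⟨v, hv⟩) else 0 with hF
    have hexp2 : (U : ((O ⧸ (IsLocalRing.maximalIdeal O) ^ n) ⊗[k] B))
        = F 0 + ∑ h : Fin (n - 1), F (h.val + 1) := by
      rw [← fin_sum_split hn F]
      conv_lhs => rw [hexp]
      refine Finset.sum_congr rfl (fun i _ => ?_)
      rw [hF]
      simp only []
      rw [dif_pos i.isLt]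
    have hF0 : F 0 = (Algebra.TensorProduct.map s (AlgHom.id k B)) (C ⟨0, hn⟩) := by
      rw [hF]
      simp only []
      rw [dif_pos hn, pow_zero, ← Algebra.TensorProduct.one_def, one_mul]
    have hq : Algebra.TensorProduct.map (qAlg k O hn) (AlgHom.id k B)
        (U : ((O ⧸ (IsLocalRing.maximalIdeal O) ^ n) ⊗[k] B)) = C ⟨0, hn⟩ := by
      rw [hexp2, map_add, map_sum, hF0, qT_sB s hn hs]
      rw [Finset.sum_eq_zero (fun h _ => by
        rw [hF]
        simp only []
        rw [dif_pos (show h.val + 1 < n by omega), map_mul, qT_tpow hn htp h.val, zero_mul]),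
        add_zero]
    have hCunit : IsUnit (C ⟨0, hn⟩) := hq ▸ (U.isUnit.map _)
    set d := hCunit.unit with hd
    set x : Fin (n - 1) → ((O ⧸ IsLocalRing.maximalIdeal O) ⊗[k] B) :=
      fun h => ((d⁻¹ : ((O ⧸ IsLocalRing.maximalIdeal O) ⊗[k] B)ˣ) :
        (O ⧸ IsLocalRing.maximalIdeal O) ⊗[k] B) * C ⟨h.val + 1, by omega⟩ with hx
    have hclaim : (U : ((O ⧸ (IsLocalRing.maximalIdeal O) ^ n) ⊗[k] B))
        = (Algebra.TensorProduct.map s (AlgHom.id k B)) (d :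
            (O ⧸ IsLocalRing.maximalIdeal O) ⊗[k] B) * wittToUnitElem k O n tp B s x := by
      unfold wittToUnitElem
      rw [mul_add, mul_one, Finset.mul_sum, hexp2, hF0, IsUnit.unit_spec]
      congr 1
      refine Finset.sum_congr rfl (fun h _ => ?_)
      rw [hF]
      simp only []
      rw [dif_pos (show h.val + 1 < n by omega)]
      rw [hx]
      simp only []
      rw [mul_left_comm, ← map_mul]
      have hCd : C ⟨0, hn⟩ * ((d⁻¹ : ((O ⧸ IsLocalRing.maximalIdeal O) ⊗[k] B)ˣ) :
          (O ⧸ IsLocalRing.maximalIdeal O) ⊗[k] B) = 1 := by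
        rw [← hCunit.unit_spec]
        exact Units.mul_inv d
      rw [← mul_assoc, hCd, one_mul]
    refine ⟨x, ?_⟩
    unfold wittToQuot
    rw [dif_pos (hU x)]
    have hdU : Units.map (Algebra.TensorProduct.map s (AlgHom.id k B)).toRingHom.toMonoidHom d
        * (hU x).unit = U := by
      apply Units.ext
      rw [Units.val_mul, Units.coe_map, IsUnit.unit_spec]
      exact hclaim.symm
    have h1 : (QuotientGroup.mk (Units.map
        (Algebra.TensorProduct.map s (AlgHom.id k B)).toRingHom.toMonoidHom d) :
        _ ⧸ coeffFieldUnits k O n B s) = 1 :=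
      (QuotientGroup.eq_one_iff _).mpr (by unfold coeffFieldUnits; exact ⟨d, rfl⟩)
    rw [QuotientGroup.mk'_apply, ← hdU, QuotientGroup.mk_mul, h1, one_mul]
  · -- multiplicativity
    intro x y
    unfold wittToQuot
    rw [dif_pos (hU (wittOp x y)), dif_pos (hU x), dif_pos (hU y), ← QuotientGroup.mk_mul]
    congr 1
    apply Units.ext
    rw [Units.val_mul, IsUnit.unit_spec, IsUnit.unit_spec, IsUnit.unit_spec]
    exact wittElem_mul s hn htp x y


end
end

section
/- Let F be a field with discrete valuation v and tame symbol d_v. If x, y ∈ F^* satisfy x + y = 1, then d_v(x, y) = 1 (the Steinberg relation). -/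
open scoped Classical

/-- The integer value of a (discrete, `ℤₘ₀ = WithZero (Multiplicative ℤ)`-valued)
valuation at a nonzero element. -/
noncomputable def intVal {F : Type*} [Field F]
    (v : Valuation F (WithZero (Multiplicative ℤ))) (x : F) : ℤ :=
  if h : v x = 0 then 0 else Multiplicative.toAdd (WithZero.unzero h)

/-- The Milnor tame symbol `d_v(x,y) = (-1)^{v(x)v(y)} · x^{v(y)}/y^{v(x)} mod p_v`,
as an element of the residue field `k_v` of the valuation ring `A_v` of `v`
(junk value `0` if the representative does not lie in `A_v`, which never happens
for nonzero `x, y`). -/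
noncomputable def tameSymbol {F : Type*} [Field F]
    (v : Valuation F (WithZero (Multiplicative ℤ))) (x y : F) :
    IsLocalRing.ResidueField v.valuationSubring :=
  if h : ((-1 : F) ^ (intVal v x * intVal v y) * x ^ intVal v y / y ^ intVal v x)
      ∈ v.valuationSubring
  then IsLocalRing.residue _ ⟨_, h⟩ else 0

section aux
variable {F : Type*} [Field F] (v : Valuation F (WithZero (Multiplicative ℤ)))

lemma intVal_spec {x : F} (hx : x ≠ 0) :
    v x = ((Multiplicative.ofAdd (intVal v x) : Multiplicative ℤ) : WithZero (Multiplicative ℤ)) := by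
  have h : v x ≠ 0 := v.ne_zero_iff.mpr hx
  rw [intVal, dif_neg h, ofAdd_toAdd, WithZero.coe_unzero]

lemma intVal_eq_zero {x : F} (hx : x ≠ 0) (h1 : v x = 1) : intVal v x = 0 := by
  have := (intVal_spec v hx).symm.trans h1
  have h2 : (Multiplicative.ofAdd (intVal v x) : Multiplicative ℤ) = 1 := by
    exact_mod_cast this
  simpa using h2

lemma mem_max_iff {z : F} (hz : z ∈ v.valuationSubring) :
    (⟨z, hz⟩ : v.valuationSubring) ∈ IsLocalRing.maximalIdeal v.valuationSubring ↔ v z < 1 := by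
  rw [ValuationSubring.valuation_lt_one_iff]
  exact Iff.symm <| (Valuation.isEquiv_valuation_valuationSubring v).lt_one_iff_lt_one

lemma residue_eq_one {z : F} (hz : z ∈ v.valuationSubring) (h1 : v (z - 1) < 1) :
    IsLocalRing.residue _ (⟨z, hz⟩ : v.valuationSubring) = 1 := by
  have hz1 : z - 1 ∈ v.valuationSubring := sub_mem hz (one_mem _)
  have e : (⟨z, hz⟩ : v.valuationSubring) - 1 = ⟨z - 1, hz1⟩ := rfl
  have h0 : IsLocalRing.residue _ ((⟨z, hz⟩ : v.valuationSubring) - 1) = 0 := by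
    rw [e]
    exact Ideal.Quotient.eq_zero_iff_mem.mpr ((mem_max_iff v hz1).mpr h1)
  rw [map_sub, map_one, sub_eq_zero] at h0
  exact h0

lemma zpow_sub_one_lt {u : F} (hu : v u = 1) (hu1 : v (u - 1) < 1) (n : ℤ) :
    v (u ^ n - 1) < 1 := by
  have hu0 : u ≠ 0 := by
    intro h; rw [h, map_zero] at hu; exact zero_ne_one hu
  have hnat : ∀ m : ℕ, v (u ^ m - 1) < 1 := by
    intro m
    induction m with
    | zero => simpa using zero_lt_one
    | succ k ih =>
      have key : u ^ (k + 1) - 1 = u ^ k * (u - 1) + (u ^ k - 1) := by ring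
      rw [key]
      calc v (u ^ k * (u - 1) + (u ^ k - 1)) ≤ max (v (u ^ k * (u - 1))) (v (u ^ k - 1)) :=
            v.map_add _ _
        _ < 1 := by
            rw [max_lt_iff]
            refine ⟨?_, ih⟩
            rw [map_mul, map_pow, hu, one_pow, one_mul]
            exact hu1
  obtain ⟨m, rfl | rfl⟩ := n.eq_nat_or_neg
  · rw [zpow_natCast]; exact hnat m
  · have e : u ^ (-(m : ℤ)) - 1 = (1 - u ^ m) / u ^ m := by
      field_simp
      rw [zpow_neg, zpow_natCast, sub_mul, inv_mul_cancel₀ (pow_ne_zero _ hu0), one_mul]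
    rw [e, map_div₀, map_pow, hu, one_pow, div_one, ← v.map_neg, neg_sub]
    exact hnat m

lemma tameSymbol_of (x y : F)
    (h1 : v ((-1 : F) ^ (intVal v x * intVal v y) * x ^ intVal v y / y ^ intVal v x) = 1)
    (h2 : v ((-1 : F) ^ (intVal v x * intVal v y) * x ^ intVal v y / y ^ intVal v x - 1) < 1) :
    tameSymbol v x y = 1 := by
  have hmem : ((-1 : F) ^ (intVal v x * intVal v y) * x ^ intVal v y / y ^ intVal v x)
      ∈ v.valuationSubring := le_of_eq h1
  rw [tameSymbol, dif_pos hmem]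
  exact residue_eq_one v hmem h2

end aux


/-- The Steinberg relation: if `x + y = 1` with `x, y ∈ F^*`, then `d_v(x, y) = 1`. -/
theorem tameSymbol_steinberg {F : Type*} [Field F]
    (v : Valuation F (WithZero (Multiplicative ℤ))) (hv : Function.Surjective v)
    (x y : F) (hx : x ≠ 0) (hy : y ≠ 0) (hxy : x + y = 1) :
    tameSymbol v x y = 1 := by
  rcases lt_trichotomy (v x) 1 with hlt | heq | hgt
  · -- v x < 1, so v y = 1, intVal v y = 0
    have hvy1 : v y = 1 := by
      have e : y = 1 - x := by linear_combination hxy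
      rw [e]; exact v.map_one_sub_of_lt hlt
    have hb0 : intVal v y = 0 := intVal_eq_zero v hy hvy1
    apply tameSymbol_of
    · rw [hb0]
      simp only [mul_zero, zpow_zero, one_mul, mul_one]
      rw [map_div₀, map_one, map_zpow₀, hvy1, one_zpow, div_one]
    · rw [hb0]
      simp only [mul_zero, zpow_zero, one_mul, mul_one]
      have e : (1 : F) / y ^ intVal v x = (y⁻¹) ^ intVal v x := by
        rw [one_div, ← inv_zpow]
      rw [e]
      apply zpow_sub_one_lt
      · rw [map_inv₀, hvy1, inv_one]
      · have e2 : y⁻¹ - 1 = x / y := by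
          field_simp; linear_combination -hxy
        rw [e2, map_div₀, hvy1, div_one]
        exact hlt
  · -- v x = 1, intVal v x = 0
    have ha0 : intVal v x = 0 := intVal_eq_zero v hx heq
    have hylt : v y ≤ 1 := by
      by_contra h
      push_neg at h
      have hxy' : v x = v y := by
        have e : x = 1 - y := by linear_combination hxy
        rw [e]
        exact v.map_sub_eq_of_lt_right (by rwa [map_one])
      rw [heq] at hxy'; exact absurd hxy'.symm (ne_of_gt h)
    apply tameSymbol_of
    · rw [ha0]
      simp only [zero_mul, zpow_zero, one_mul, div_one]
      rw [map_zpow₀, heq, one_zpow]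
    · rw [ha0]
      simp only [zero_mul, zpow_zero, one_mul, div_one]
      rcases lt_or_eq_of_le hylt with h | h
      · apply zpow_sub_one_lt v heq
        have e : x - 1 = -y := by linear_combination hxy
        rw [e, v.map_neg]; exact h
      · have hb0 : intVal v y = 0 := intVal_eq_zero v hy h
        rw [hb0]
        simpa using zero_lt_one
  · -- v x > 1, so v y = v x, intVal equal
    have hvyx : v y = v x := by
      have e : y = 1 - x := by linear_combination hxy
      rw [e]
      exact v.map_sub_eq_of_lt_right (by rwa [map_one])
    have hab : intVal v x = intVal v y := by
      have h1 := (intVal_spec v hy).symm.trans (hvyx.trans (intVal_spec v hx))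
      have h2 := WithZero.coe_inj.mp h1
      simpa using (Multiplicative.ofAdd.injective h2).symm
    have hy1 : (1 : WithZero (Multiplicative ℤ)) < v y := hvyx ▸ hgt
    have hu : v (-x / y) = 1 := by
      rw [map_div₀, v.map_neg, hvyx]
      exact div_self (v.ne_zero_iff.mpr hx)
    have hu1 : v (-x / y - 1) < 1 := by
      have e : -x / y - 1 = -(1 / y) := by
        field_simp; linear_combination -hxy
      rw [e, v.map_neg, one_div, map_inv₀]
      exact inv_lt_one_of_one_lt₀ hy1
    have hsign : ((-1 : F)) ^ (intVal v x * intVal v x) = (-1 : F) ^ intVal v x := by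
      rcases Int.even_or_odd (intVal v x) with he | ho
      · rw [he.neg_one_zpow, (he.mul_right _).neg_one_zpow]
      · rw [ho.neg_one_zpow, (ho.mul ho).neg_one_zpow]
    have hrep : (-1 : F) ^ (intVal v x * intVal v y) * x ^ intVal v y / y ^ intVal v x
        = (-x / y) ^ intVal v x := by
      rw [← hab, hsign,
        show (-x / y : F) = (-1) * x / y by ring, div_zpow, mul_zpow]
    apply tameSymbol_of
    · rw [hrep, map_zpow₀, hu, one_zpow]
    · rw [hrep]
      exact zpow_sub_one_lt v hu hu1 _
end

section
/- Let k be a field of characteristic 0 and B a local artinian finite-dimensional k-algebra with maximal ideal m. Every unit u of the Laurent series field-like ring B((z)) with 'valuation' n (i.e. u = z^n·ε with ε ∈ B⟦z⟧^* having unit constant coefficient, modulo nilpotent lower-order terms) can be written uniquely as u = λ zⁿ · P₋ · P₊ where λ ∈ B^*, P₋ = ∏_{i=1}^{l}(1 - a₋ᵢ z^{-i}) with a₋ᵢ ∈ m nilpotent, and P₊ = ∏_{i=1}^{∞}(1 - aᵢ zⁱ) with aᵢ ∈ B. In particular, the group B((z))^* decomposes as ℤ × B^* × Γ₋(B) ×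 Γ₊(B). -/
open HahnSeries Finset

namespace LaurentDecompAux

variable {B : Type*} [CommRing B]

/-- Truncation of a Laurent series to strictly negative degrees. -/
noncomputable def negPart (f : LaurentSeries B) : LaurentSeries B where
  coeff i := if i < 0 then f.coeff i else 0
  isPWO_support' := f.isPWO_support.mono (by
    intro i hi
    simp only [Function.mem_support] at hi
    by_cases h : i < 0
    · rw [if_pos h] at hi; exact hi
    · rw [if_neg h] at hi; exact absurd rfl hi)

lemma negPart_coeff (f : LaurentSeries B) (i : ℤ) :
    (negPart f).coeff i = if i < 0 then f.coeff i else 0 := rfl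

lemma coeff_sum {ι : Type*} (t : Finset ι) (F : ι → LaurentSeries B) (j : ℤ) :
    (∑ i ∈ t, F i).coeff j = ∑ i ∈ t, (F i).coeff j := by
  classical
  induction t using Finset.cons_induction with
  | empty => simp
  | cons a t ha ih => rw [Finset.sum_cons, Finset.sum_cons, HahnSeries.coeff_add, ih]

lemma mul_coeff_pos_eq_zero {f g : LaurentSeries B} (hf : ∀ i : ℤ, 0 < i → f.coeff i = 0)
    (hg : ∀ i : ℤ, 0 < i → g.coeff i = 0) {n : ℤ} (hn : 0 < n) : (f * g).coeff n = 0 := by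
  rw [HahnSeries.coeff_mul]
  refine Finset.sum_eq_zero ?_
  rintro ⟨a, b⟩ hab
  rw [Finset.mem_addAntidiagonal] at hab
  obtain ⟨ha, hb, habn⟩ := hab
  simp only at habn ⊢
  rcases lt_or_ge 0 a with h | h
  · rw [hf a h, zero_mul]
  · rw [hg b (by omega), mul_zero]

lemma mul_coeff_neg_eq_zero {f g : LaurentSeries B} (hf : ∀ i : ℤ, i < 0 → f.coeff i = 0)
    (hg : ∀ i : ℤ, i < 0 → g.coeff i = 0) {n : ℤ} (hn : n < 0) : (f * g).coeff n = 0 := by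
  rw [HahnSeries.coeff_mul]
  refine Finset.sum_eq_zero ?_
  rintro ⟨a, b⟩ hab
  rw [Finset.mem_addAntidiagonal] at hab
  obtain ⟨ha, hb, habn⟩ := hab
  simp only at habn ⊢
  rcases lt_or_ge a 0 with h | h
  · rw [hf a h, zero_mul]
  · rw [hg b (by omega), mul_zero]

lemma mul_coeff_nonneg_eq_zero {f g : LaurentSeries B} (hf : ∀ i : ℤ, 0 ≤ i → f.coeff i = 0)
    (hg : ∀ i : ℤ, 0 ≤ i → g.coeff i = 0) {n : ℤ} (hn : 0 ≤ n) : (f * g).coeff n = 0 := by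
  rw [HahnSeries.coeff_mul]
  refine Finset.sum_eq_zero ?_
  rintro ⟨a, b⟩ hab
  rw [Finset.mem_addAntidiagonal] at hab
  obtain ⟨ha, hb, habn⟩ := hab
  rw [HahnSeries.mem_support] at ha hb
  simp only at habn ⊢
  have h1 : a < 0 := by by_contra h; exact ha (hf a (by omega))
  have h2 : b < 0 := by by_contra h; exact hb (hg b (by omega))
  omega

lemma mul_coeff_zero_hi {f g : LaurentSeries B} (hf : ∀ i : ℤ, 0 < i → f.coeff i = 0)
    (hg : ∀ i : ℤ, 0 < i → g.coeff i = 0) : (f * g).coeff 0 = f.coeff 0 * g.coeff 0 := by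
  rw [HahnSeries.coeff_mul]
  apply Finset.sum_eq_single ((0 : ℤ), (0 : ℤ))
  · rintro ⟨a, b⟩ hab hne
    rw [Finset.mem_addAntidiagonal] at hab
    obtain ⟨ha, hb, habn⟩ := hab
    rw [HahnSeries.mem_support] at ha hb
    simp only at habn ⊢
    have h1 : a ≤ 0 := by by_contra h; exact ha (hf a (by omega))
    have h2 : b ≤ 0 := by by_contra h; exact hb (hg b (by omega))
    exact absurd (Prod.ext (by omega : a = 0) (by omega : b = 0)) hne
  · intro h
    rw [Finset.mem_addAntidiagonal] at h
    by_cases h0 : f.coeff 0 = 0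
    · rw [h0, zero_mul]
    · by_cases h1 : g.coeff 0 = 0
      · rw [h1, mul_zero]
      · exact absurd ⟨(HahnSeries.mem_support f 0).2 h0, (HahnSeries.mem_support g 0).2 h1,
          add_zero 0⟩ h

lemma mul_coeff_zero_lo {f g : LaurentSeries B} (hf : ∀ i : ℤ, i < 0 → f.coeff i = 0)
    (hg : ∀ i : ℤ, i < 0 → g.coeff i = 0) : (f * g).coeff 0 = f.coeff 0 * g.coeff 0 := by
  rw [HahnSeries.coeff_mul]
  apply Finset.sum_eq_single ((0 : ℤ), (0 : ℤ))
  · rintro ⟨a, b⟩ hab hne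
    rw [Finset.mem_addAntidiagonal] at hab
    obtain ⟨ha, hb, habn⟩ := hab
    rw [HahnSeries.mem_support] at ha hb
    simp only at habn ⊢
    have h1 : 0 ≤ a := by by_contra h; exact ha (hf a (by omega))
    have h2 : 0 ≤ b := by by_contra h; exact hb (hg b (by omega))
    exact absurd (Prod.ext (by omega : a = 0) (by omega : b = 0)) hne
  · intro h
    rw [Finset.mem_addAntidiagonal] at h
    by_cases h0 : f.coeff 0 = 0
    · rw [h0, zero_mul]
    · by_cases h1 : g.coeff 0 = 0
      · rw [h1, mul_zero]
      · exact absurd ⟨(HahnSeries.mem_support f 0).2 h0, (HahnSeries.mem_support g 0).2 h1,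
          add_zero 0⟩ h

lemma coeff_mul_mem_left {I : Ideal B} {f g : LaurentSeries B}
    (hf : ∀ i : ℤ, f.coeff i ∈ I) (n : ℤ) : (f * g).coeff n ∈ I := by
  rw [HahnSeries.coeff_mul]
  exact Submodule.sum_mem _ fun c _ => I.mul_mem_right _ (hf _)

lemma coeff_mul_mem_right {I : Ideal B} {f g : LaurentSeries B}
    (hg : ∀ i : ℤ, g.coeff i ∈ I) (n : ℤ) : (f * g).coeff n ∈ I := by
  rw [HahnSeries.coeff_mul]
  exact Submodule.sum_mem _ fun c _ => I.mul_mem_left _ (hg _)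

lemma coeff_mul_mem_mul {I J : Ideal B} {f g : LaurentSeries B}
    (hf : ∀ i : ℤ, f.coeff i ∈ I) (hg : ∀ i : ℤ, g.coeff i ∈ J) (n : ℤ) :
    (f * g).coeff n ∈ I * J := by
  rw [HahnSeries.coeff_mul]
  exact Submodule.sum_mem _ fun c _ => Ideal.mul_mem_mul (hf _) (hg _)

/-- The shape of elements of `Γ₋(B)`. -/
def Shaped (f : LaurentSeries B) : Prop :=
  f.coeff 0 = 1 ∧ (∀ i : ℤ, 0 < i → f.coeff i = 0) ∧ ∀ i : ℤ, i < 0 → f.coeff i ∈ nilradical B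

lemma shaped_one : Shaped (1 : LaurentSeries B) :=
  ⟨by rw [HahnSeries.coeff_one, if_pos rfl],
   fun i hi => by rw [HahnSeries.coeff_one, if_neg (by omega)],
   fun i hi => by rw [HahnSeries.coeff_one, if_neg (by omega)]; exact zero_mem _⟩

lemma Shaped.mul {f g : LaurentSeries B} (hf : Shaped f) (hg : Shaped g) : Shaped (f * g) := by
  obtain ⟨hf0, hfp, hfn⟩ := hf
  obtain ⟨hg0, hgp, hgn⟩ := hg
  refine ⟨?_, fun n hn => mul_coeff_pos_eq_zero hfp hgp hn, fun n hn => ?_⟩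
  · rw [mul_coeff_zero_hi hfp hgp, hf0, hg0, one_mul]
  · rw [HahnSeries.coeff_mul]
    refine Submodule.sum_mem _ ?_
    rintro ⟨a, b⟩ hab
    rw [Finset.mem_addAntidiagonal] at hab
    obtain ⟨ha, hb, h⟩ := hab
    simp only at h ⊢
    rcases lt_or_ge a 0 with h' | h'
    · exact Ideal.mul_mem_right _ _ (hfn a h')
    · exact Ideal.mul_mem_left _ _ (hgn b (by omega))

lemma isNilpotent_of_neg {s : LaurentSeries B} (h0 : ∀ i : ℤ, 0 ≤ i → s.coeff i = 0)
    (hn : ∀ i : ℤ, s.coeff i ∈ nilradical B) : IsNilpotent s := by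
  by_cases hs : s = 0
  · exact ⟨1, by simp [hs]⟩
  have hne : s.support.Nonempty := support_nonempty_iff.2 hs
  have hfin : s.support.Finite := by
    apply Set.Finite.subset (Set.finite_Icc (s.isWF_support.min hne) (-1))
    intro x hx
    refine Set.mem_Icc.2 ⟨s.isWF_support.min_le hne hx, ?_⟩
    rw [HahnSeries.mem_support] at hx
    by_contra h
    exact hx (h0 x (by omega))
  have hsum : s = ∑ i ∈ hfin.toFinset, single i (s.coeff i) := by
    ext j
    rw [coeff_sum, Finset.sum_eq_single j (fun i _ hij => coeff_single_of_ne (Ne.symm hij))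
      (fun hj => ?_)]
    · rw [coeff_single_same]
    · rw [coeff_single_same]
      by_contra h
      exact hj (hfin.mem_toFinset.2 ((HahnSeries.mem_support s j).2 h))
  rw [hsum]
  refine isNilpotent_sum fun i _ => ?_
  obtain ⟨K, hK⟩ := mem_nilradical.mp (hn i)
  exact ⟨K, by rw [single_pow, hK, single_eq_zero]⟩

lemma exists_inv_neg {I : Ideal B} (hI : I ≤ nilradical B) {s : LaurentSeries B}
    (h0 : ∀ i : ℤ, 0 ≤ i → s.coeff i = 0) (hsI : ∀ i : ℤ, s.coeff i ∈ I) :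
    ∃ R : LaurentSeries B, (1 + s) * R = 1 ∧ R.coeff 0 = 1 ∧ (∀ i : ℤ, 0 < i → R.coeff i = 0) ∧
      (∀ i : ℤ, (R - 1).coeff i ∈ I) := by
  obtain ⟨K₀, hK₀⟩ := (isNilpotent_of_neg h0 (fun i => hI (hsI i))).neg
  have hsK : (-s) ^ (K₀ + 1) = 0 := by rw [pow_succ, hK₀, zero_mul]
  have neg0 : ∀ i : ℤ, 0 ≤ i → (-s).coeff i = 0 := fun i hi => by
    rw [HahnSeries.coeff_neg, h0 i hi, neg_zero]
  have negI : ∀ i : ℤ, (-s).coeff i ∈ I := fun i => by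
    rw [HahnSeries.coeff_neg]; exact I.neg_mem (hsI i)
  have hpow0 : ∀ m : ℕ, ∀ i : ℤ, 0 ≤ i → ((-s) ^ (m + 1)).coeff i = 0 := by
    intro m
    induction m with
    | zero => simpa using neg0
    | succ m ih =>
      intro i hi
      rw [pow_succ]
      exact mul_coeff_nonneg_eq_zero ih neg0 hi
  have hpowI : ∀ m : ℕ, ∀ i : ℤ, ((-s) ^ (m + 1)).coeff i ∈ I := by
    intro m i
    rw [pow_succ]
    exact coeff_mul_mem_right negI i
  refine ⟨∑ i ∈ Finset.range (K₀ + 1), (-s) ^ i, ?_, ?_, ?_, ?_⟩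
  · have hgeom := geom_sum_mul (-s) (K₀ + 1)
    rw [hsK] at hgeom
    linear_combination -hgeom
  · rw [coeff_sum, Finset.sum_range_succ']
    have : ∀ i ∈ Finset.range K₀, ((-s) ^ (i + 1)).coeff 0 = 0 := fun i _ => hpow0 i 0 le_rfl
    rw [Finset.sum_congr rfl this, Finset.sum_const, smul_zero, zero_add, pow_zero,
      HahnSeries.coeff_one, if_pos rfl]
  · intro i hi
    rw [coeff_sum, Finset.sum_range_succ']
    have : ∀ j ∈ Finset.range K₀, ((-s) ^ (j + 1)).coeff i = 0 := fun j _ => hpow0 j i (by omega)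
    rw [Finset.sum_congr rfl this, Finset.sum_const, smul_zero, zero_add, pow_zero,
      HahnSeries.coeff_one, if_neg (by omega)]
  · intro i
    have hsplit : (∑ j ∈ Finset.range (K₀ + 1), (-s) ^ j) - 1
        = ∑ j ∈ Finset.range K₀, (-s) ^ (j + 1) := by
      rw [Finset.sum_range_succ', pow_zero, add_sub_cancel_right]
    rw [hsplit, coeff_sum]
    exact Submodule.sum_mem _ fun j _ => hpowI j i

lemma exists_inv_nonneg {W : LaurentSeries B} (h0 : ∀ i : ℤ, i < 0 → W.coeff i = 0)
    (hu : IsUnit (W.coeff 0)) :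
    ∃ W' : LaurentSeries B, (∀ i : ℤ, i < 0 → W'.coeff i = 0) ∧ IsUnit (W'.coeff 0) ∧
      W * W' = 1 := by
  set F : PowerSeries B := PowerSeries.mk fun n => W.coeff n with hF
  have hcast : ∀ x : PowerSeries B, ∀ i : ℤ, i < 0 →
      ((HahnSeries.ofPowerSeries ℤ B) x).coeff i = 0 := by
    intro x i hi
    rw [ofPowerSeries_apply, embDomain_notin_range]
    simp only [Set.mem_range, RelEmbedding.coe_mk, Function.Embedding.coeFn_mk]
    rintro ⟨m, hm⟩
    simp [Nat.castOrderEmbedding] at hm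
    omega
  have hFW : (HahnSeries.ofPowerSeries ℤ B) F = W := by
    ext i
    rcases le_or_gt 0 i with h | h
    · lift i to ℕ using h
      rw [ofPowerSeries_apply_coeff, hF, PowerSeries.coeff_mk]
    · rw [hcast F i h, h0 i h]
  have hc : PowerSeries.constantCoeff F = W.coeff 0 := by
    rw [← PowerSeries.coeff_zero_eq_constantCoeff_apply, hF, PowerSeries.coeff_mk]
    simp
  refine ⟨(HahnSeries.ofPowerSeries ℤ B) (F.invOfUnit hu.unit),
    fun i hi => hcast _ i hi, ?_, ?_⟩
  · have h00 : ((HahnSeries.ofPowerSeries ℤ B) (F.invOfUnit hu.unit)).coeff ((0 : ℕ) : ℤ)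
        = PowerSeries.coeff 0 (F.invOfUnit hu.unit) := ofPowerSeries_apply_coeff _ 0
    rw [Nat.cast_zero] at h00
    rw [h00, PowerSeries.coeff_zero_eq_constantCoeff_apply, PowerSeries.constantCoeff_invOfUnit]
    exact (hu.unit⁻¹).isUnit
  · have key : (HahnSeries.ofPowerSeries ℤ B) F *
        (HahnSeries.ofPowerSeries ℤ B) (F.invOfUnit hu.unit) = 1 := by
      rw [← map_mul, PowerSeries.mul_invOfUnit F hu.unit (by rw [hc, IsUnit.unit_spec]), map_one]
    rwa [hFW] at key

lemma step {I : Ideal B} (hI : I ≤ nilradical B) {v : LaurentSeries B}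
    (h0 : IsUnit (v.coeff 0)) (hneg : ∀ i : ℤ, i < 0 → v.coeff i ∈ I) :
    ∃ s v₁ : LaurentSeries B, (∀ i : ℤ, 0 ≤ i → s.coeff i = 0) ∧ (∀ i : ℤ, s.coeff i ∈ I) ∧
      IsUnit (v₁.coeff 0) ∧ (∀ i : ℤ, i < 0 → v₁.coeff i ∈ I * I) ∧ v = (1 + s) * v₁ := by
  set nv := negPart v with hnv
  set W := v - nv with hW
  have hWneg : ∀ i : ℤ, i < 0 → W.coeff i = 0 := fun i hi => by
    rw [hW, HahnSeries.coeff_sub, hnv, negPart_coeff, if_pos hi, sub_self]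
  have hW0 : W.coeff 0 = v.coeff 0 := by
    rw [hW, HahnSeries.coeff_sub, hnv, negPart_coeff, if_neg (by omega), sub_zero]
  obtain ⟨W', hW'neg, hW'0, hWW'⟩ := exists_inv_nonneg hWneg (hW0 ▸ h0)
  have hnvI : ∀ i : ℤ, nv.coeff i ∈ I := fun i => by
    rw [hnv, negPart_coeff]
    split
    · exact hneg i ‹_›
    · exact I.zero_mem
  set h := nv * W' with hh
  have hhI : ∀ i : ℤ, h.coeff i ∈ I := fun i => coeff_mul_mem_left hnvI i
  set s := negPart h with hs
  set r := h - s with hr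
  have hs0 : ∀ i : ℤ, 0 ≤ i → s.coeff i = 0 := fun i hi => by
    rw [hs, negPart_coeff, if_neg (by omega)]
  have hsI : ∀ i : ℤ, s.coeff i ∈ I := fun i => by
    rw [hs, negPart_coeff]
    split
    · exact hhI i
    · exact I.zero_mem
  have hrneg : ∀ i : ℤ, i < 0 → r.coeff i = 0 := fun i hi => by
    rw [hr, HahnSeries.coeff_sub, hs, negPart_coeff, if_pos hi, sub_self]
  have hrI : ∀ i : ℤ, r.coeff i ∈ I := fun i => by
    rw [hr, HahnSeries.coeff_sub]
    exact I.sub_mem (hhI i) (hsI i)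
  obtain ⟨R, hR1, hR0, hRpos, hRI⟩ := exists_inv_neg hI hs0 hsI
  refine ⟨s, W + R * (r * W), hs0, hsI, ?_, ?_, ?_⟩
  · have hmem : (R * (r * W)).coeff 0 ∈ I :=
      coeff_mul_mem_right (fun i => coeff_mul_mem_left hrI i) 0
    have hx : IsNilpotent ((R * (r * W)).coeff 0) := mem_nilradical.mp (hI hmem)
    rw [HahnSeries.coeff_add, hW0]
    exact hx.isUnit_add_left_of_commute h0 (Commute.all _ _)
  · intro i hi
    have hsplit : R * (r * W) = r * W + (R - 1) * (r * W) := by ring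
    rw [HahnSeries.coeff_add, hsplit, HahnSeries.coeff_add, hWneg i hi,
      mul_coeff_neg_eq_zero hrneg hWneg hi, zero_add, zero_add]
    exact coeff_mul_mem_mul (fun j => hRI j) (fun j => coeff_mul_mem_left hrI j) i
  · have h1 : h * W = nv := by
      calc h * W = nv * (W * W') := by rw [hh]; ring
      _ = nv := by rw [hWW', mul_one]
    have h2 : s + r = h := by rw [hr]; ring
    calc v = W + nv := by rw [hW]; ring
    _ = W + (s + r) * W := by rw [h2, h1]
    _ = (1 + s) * W + ((1 + s) * R) * (r * W) := by rw [hR1]; ring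
    _ = (1 + s) * (W + R * (r * W)) := by ring

lemma core {m : Ideal B} (hm : m ≤ nilradical B) {N : ℕ} (hN : m ^ N = ⊥) :
    ∀ d j : ℕ, 1 ≤ j → N ≤ j + d → ∀ v : LaurentSeries B, IsUnit (v.coeff 0) →
      (∀ i : ℤ, i < 0 → v.coeff i ∈ m ^ j) →
      ∃ P S : LaurentSeries B, Shaped P ∧ (∀ i : ℤ, i < 0 → S.coeff i = 0) ∧
        IsUnit (S.coeff 0) ∧ v = P * S := by
  intro d
  induction d with
  | zero =>
    intro j hj hNj v hv0 hneg
    refine ⟨1, v, shaped_one, fun i hi => ?_, hv0, (one_mul v).symm⟩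
    have hbot : m ^ j ≤ ⊥ := hN ▸ Ideal.pow_le_pow_right (by omega)
    simpa using hbot (hneg i hi)
  | succ d ih =>
    intro j hj hNj v hv0 hneg
    have hIm : m ^ j ≤ nilradical B := (Ideal.pow_le_self (by omega)).trans hm
    obtain ⟨s, v₁, hs0, hsI, hv₁0, hv₁neg, hfact⟩ := step hIm hv0 hneg
    have hneg' : ∀ i : ℤ, i < 0 → v₁.coeff i ∈ m ^ (j + 1) := by
      intro i hi
      have h1 := hv₁neg i hi
      rw [← _root_.pow_add] at h1
      exact Ideal.pow_le_pow_right (by omega) h1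
    obtain ⟨P, S, hP, hSneg, hS0, hfact'⟩ := ih (j + 1) (by omega) (by omega) v₁ hv₁0 hneg'
    refine ⟨(1 + s) * P, S, ?_, hSneg, hS0, by rw [hfact, hfact', mul_assoc]⟩
    refine Shaped.mul ⟨?_, ?_, ?_⟩ hP
    · rw [HahnSeries.coeff_add, HahnSeries.coeff_one, if_pos rfl, hs0 0 le_rfl, add_zero]
    · intro i hi
      rw [HahnSeries.coeff_add, HahnSeries.coeff_one, if_neg (by omega), hs0 i (by omega),
        add_zero]
    · intro i hi
      rw [HahnSeries.coeff_add, HahnSeries.coeff_one, if_neg (by omega), zero_add]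
      exact hIm (hsI i)

lemma exists_val [IsLocalRing B] (u : (LaurentSeries B)ˣ) :
    ∃ n : ℤ, IsUnit ((u : LaurentSeries B).coeff n) ∧
      ∀ i : ℤ, i < n → (u : LaurentSeries B).coeff i ∈ IsLocalRing.maximalIdeal B := by
  set π : B →+* IsLocalRing.ResidueField B := IsLocalRing.residue B with hπ
  have hmap1 : (1 : LaurentSeries B).map
      (π : B →ₙ+* IsLocalRing.ResidueField B) = 1 := by
    ext a
    rw [HahnSeries.map_coeff, HahnSeries.coeff_one, HahnSeries.coeff_one]
    split
    · exact map_one π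
    · exact map_zero π
  set x : LaurentSeries (IsLocalRing.ResidueField B) :=
    (u : LaurentSeries B).map (π : B →ₙ+* _) with hx
  have hx1 : x * ((u⁻¹ : (LaurentSeries B)ˣ) : LaurentSeries B).map (π : B →ₙ+* _) = 1 := by
    rw [hx, ← HahnSeries.map_mul, Units.mul_inv, hmap1]
  have hxne : x ≠ 0 := by
    intro h
    rw [h, zero_mul] at hx1
    exact one_ne_zero hx1.symm
  refine ⟨x.order, ?_, ?_⟩
  · have h1 : x.coeff x.order ≠ 0 := mt coeff_order_eq_zero.mp hxne
    have h2 : x.coeff x.order = π ((u : LaurentSeries B).coeff x.order) := by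
      rw [hx, HahnSeries.map_coeff]; rfl
    by_contra hcu
    have hmem : (u : LaurentSeries B).coeff x.order ∈ IsLocalRing.maximalIdeal B := hcu
    exact h1 (h2.trans ((IsLocalRing.residue_eq_zero_iff _).mpr hmem))
  · intro i hi
    have h3 : x.coeff i = 0 := coeff_eq_zero_of_lt_order hi
    rw [hx, HahnSeries.map_coeff] at h3
    exact (IsLocalRing.residue_eq_zero_iff _).mp h3

lemma uniq [Nontrivial B] {n₁ n₂ : ℤ} {l₁ l₂ : Bˣ} {P₁ P₂ Q₁ Q₂ : LaurentSeries B}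
    (hP₁ : Shaped P₁) (hP₂ : Shaped P₂)
    (hQ₁0 : Q₁.coeff 0 = 1) (hQ₁ : ∀ i : ℤ, i < 0 → Q₁.coeff i = 0)
    (hQ₂0 : Q₂.coeff 0 = 1) (hQ₂ : ∀ i : ℤ, i < 0 → Q₂.coeff i = 0)
    (E : single n₁ (l₁ : B) * P₁ * Q₁ = single n₂ (l₂ : B) * P₂ * Q₂) :
    n₁ = n₂ ∧ l₁ = l₂ ∧ P₁ = P₂ ∧ Q₁ = Q₂ := by
  obtain ⟨R₂, hR₂1, hR₂0, hR₂pos, hR₂I⟩ := exists_inv_neg (le_refl (nilradical B))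
      (s := P₂ - 1)
      (fun i hi => by
        rcases lt_or_eq_of_le hi with h | h
        · rw [HahnSeries.coeff_sub, HahnSeries.coeff_one, hP₂.2.1 i h, if_neg (by omega),
            sub_zero]
        · rw [HahnSeries.coeff_sub, HahnSeries.coeff_one, ← h, hP₂.1, if_pos rfl, sub_self])
      (fun i => by
        rcases lt_trichotomy i 0 with h | h | h
        · rw [HahnSeries.coeff_sub, HahnSeries.coeff_one, if_neg (by omega), sub_zero]
          exact hP₂.2.2 i h
        · rw [HahnSeries.coeff_sub, HahnSeries.coeff_one, h, hP₂.1, if_pos rfl, sub_self]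
          exact zero_mem _
        · rw [HahnSeries.coeff_sub, HahnSeries.coeff_one, hP₂.2.1 i h, if_neg (by omega),
            sub_zero]
          exact zero_mem _)
  have hP₂R₂ : P₂ * R₂ = 1 := by
    have h : (1 : LaurentSeries B) + (P₂ - 1) = P₂ := by ring
    rw [← h]
    exact hR₂1
  have hR₂shaped : Shaped R₂ := ⟨hR₂0, hR₂pos, fun i hi => by
    have h := hR₂I i
    rwa [HahnSeries.coeff_sub, HahnSeries.coeff_one, if_neg (by omega), sub_zero] at h⟩
  obtain ⟨Q₁', hQ₁'neg, hQ₁'0u, hQQ'⟩ := exists_inv_nonneg hQ₁ (by rw [hQ₁0]; exact isUnit_one)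
  set S := P₁ * R₂ with hS
  set Y := Q₂ * Q₁' with hY
  have hSsh : Shaped S := Shaped.mul hP₁ hR₂shaped
  have hYneg : ∀ i : ℤ, i < 0 → Y.coeff i = 0 := fun i hi =>
    mul_coeff_neg_eq_zero hQ₂ hQ₁'neg hi
  have hY0 : IsUnit (Y.coeff 0) := by
    rw [hY, mul_coeff_zero_lo hQ₂ hQ₁'neg, hQ₂0, one_mul]
    exact hQ₁'0u
  have star : single n₁ (l₁ : B) * S = single n₂ (l₂ : B) * Y := by
    rw [hS, hY]
    linear_combination (R₂ * Q₁') * E - (single n₁ (l₁ : B) * P₁ * R₂) * hQQ'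
      + (single n₂ (l₂ : B) * Q₂ * Q₁') * hP₂R₂
  rcases lt_trichotomy n₁ n₂ with hlt | heq | hgt
  · exfalso
    have h1 : (single n₁ (l₁ : B) * S).coeff (0 + n₁) = (l₁ : B) * S.coeff 0 :=
      coeff_single_mul_add
    have h2 : (single n₂ (l₂ : B) * Y).coeff ((n₁ - n₂) + n₂) = (l₂ : B) * Y.coeff (n₁ - n₂) :=
      coeff_single_mul_add
    rw [zero_add] at h1
    rw [show n₁ - n₂ + n₂ = n₁ from by omega] at h2
    have h3 : (l₁ : B) * S.coeff 0 = (l₂ : B) * Y.coeff (n₁ - n₂) := by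
      rw [← h1, ← h2, star]
    rw [hSsh.1, mul_one, hYneg _ (by omega), mul_zero] at h3
    exact l₁.ne_zero h3
  · subst heq
    have hco : ∀ i : ℤ, (l₁ : B) * S.coeff i = (l₂ : B) * Y.coeff i := by
      intro i
      have h1 : (single n₁ (l₁ : B) * S).coeff (i + n₁) = (l₁ : B) * S.coeff i :=
        coeff_single_mul_add
      have h2 : (single n₁ (l₂ : B) * Y).coeff (i + n₁) = (l₂ : B) * Y.coeff i :=
        coeff_single_mul_add
      rw [← h1, ← h2, star]
    have hS1 : S = 1 := by
      ext i
      rcases lt_trichotomy i 0 with h | h | h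
      · have h4 := hco i
        rw [hYneg i h, mul_zero, Units.mul_right_eq_zero] at h4
        rw [h4, HahnSeries.coeff_one, if_neg (by omega)]
      · rw [h, hSsh.1, HahnSeries.coeff_one, if_pos rfl]
      · rw [hSsh.2.1 i h, HahnSeries.coeff_one, if_neg (by omega)]
    have hPP : P₁ = P₂ := by
      calc P₁ = P₁ * (P₂ * R₂) := by rw [hP₂R₂, mul_one]
      _ = P₂ * S := by rw [hS]; ring
      _ = P₂ := by rw [hS1, mul_one]
    have E2 : single n₁ (l₁ : B) * Q₁ = single n₁ (l₂ : B) * Q₂ := by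
      rw [hPP] at E
      linear_combination R₂ * E
        + (single n₁ (l₂ : B) * Q₂ - single n₁ (l₁ : B) * Q₁) * hP₂R₂
    have hco2 : ∀ i : ℤ, (l₁ : B) * Q₁.coeff i = (l₂ : B) * Q₂.coeff i := by
      intro i
      have h1 : (single n₁ (l₁ : B) * Q₁).coeff (i + n₁) = (l₁ : B) * Q₁.coeff i :=
        coeff_single_mul_add
      have h2 : (single n₁ (l₂ : B) * Q₂).coeff (i + n₁) = (l₂ : B) * Q₂.coeff i :=
        coeff_single_mul_add
      rw [← h1, ← h2, E2]
    have hll : l₁ = l₂ := by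
      have h5 := hco2 0
      rw [hQ₁0, hQ₂0, mul_one, mul_one] at h5
      exact Units.ext h5
    have hQQ : Q₁ = Q₂ := by
      ext i
      have h6 := hco2 i
      rw [hll] at h6
      exact (Units.mul_right_inj l₂).mp h6
    exact ⟨rfl, hll, hPP, hQQ⟩
  · exfalso
    have h1 : (single n₁ (l₁ : B) * S).coeff ((n₂ - n₁) + n₁) = (l₁ : B) * S.coeff (n₂ - n₁) :=
      coeff_single_mul_add
    have h2 : (single n₂ (l₂ : B) * Y).coeff (0 + n₂) = (l₂ : B) * Y.coeff 0 :=
      coeff_single_mul_add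
    rw [show n₂ - n₁ + n₁ = n₂ from by omega] at h1
    rw [zero_add] at h2
    have h3 : (l₁ : B) * S.coeff (n₂ - n₁) = (l₂ : B) * Y.coeff 0 := by
      rw [← h1, ← h2, star]
    have hnil : IsNilpotent ((l₂ : B) * Y.coeff 0) := by
      rw [← h3]
      exact mem_nilradical.mp (Ideal.mul_mem_left _ _ (hSsh.2.2 _ (by omega)))
    have hunit : IsUnit ((l₂ : B) * Y.coeff 0) := l₂.isUnit.mul hY0
    obtain ⟨k, hk⟩ := hnil
    exact (hunit.pow k).ne_zero hk

end LaurentDecompAux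

open LaurentDecompAux HahnSeries in
/-- Let `k` be a field of characteristic `0` and `B` a local artinian finite-dimensional
`k`-algebra. Every unit `u` of the Laurent series ring `B((z))` can be written uniquely
as `u = λ zⁿ · P₋ · P₊`, where `n ∈ ℤ`, `λ ∈ B^*`, `P₋ ∈ Γ₋(B)` is a Laurent series
supported in degrees `≤ 0` with constant coefficient `1` and nilpotent lower-order
coefficients, and `P₊ ∈ Γ₊(B)` is a power series with constant coefficient `1`.
In particular `B((z))^*` decomposes as `ℤ × B^* × Γ₋(B) × Γ₊(B)`. -/
theorem laurentSeries_units_decomposition (k : Type*) [Field k] [CharZero k]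
    (B : Type*) [CommRing B] [Algebra k B] [IsLocalRing B] [IsArtinianRing B]
    [FiniteDimensional k B]
    (u : (LaurentSeries B)ˣ) :
    ∃! t : ℤ × Bˣ × LaurentSeries B × LaurentSeries B,
      -- `P₋ ∈ Γ₋(B)`
      (t.2.2.1.coeff 0 = 1 ∧ (∀ i : ℤ, 0 < i → t.2.2.1.coeff i = 0) ∧
        (∀ i : ℤ, i < 0 → IsNilpotent (t.2.2.1.coeff i))) ∧
      -- `P₊ ∈ Γ₊(B)`
      (t.2.2.2.coeff 0 = 1 ∧ (∀ i : ℤ, i < 0 → t.2.2.2.coeff i = 0)) ∧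
      -- the decomposition `u = λ zⁿ · P₋ · P₊`
      (u : LaurentSeries B) =
        HahnSeries.single t.1 ((t.2.1 : B)) * t.2.2.1 * t.2.2.2 := by
  classical
  have hjac : IsNilpotent (IsLocalRing.maximalIdeal B) := by
    have h := IsArtinianRing.isNilpotent_jacobson_bot (R := B)
    rwa [IsLocalRing.jacobson_eq_maximalIdeal ⊥ bot_ne_top] at h
  obtain ⟨N, hN0⟩ := hjac
  have hN : IsLocalRing.maximalIdeal B ^ N = ⊥ := by rw [hN0]; rfl
  have hm : IsLocalRing.maximalIdeal B ≤ nilradical B := by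
    intro a ha
    rw [mem_nilradical]
    refine ⟨N, ?_⟩
    have h := Ideal.pow_mem_pow ha N
    rwa [hN, Ideal.mem_bot] at h
  obtain ⟨n, hnu, hlow⟩ := exists_val u
  set v : LaurentSeries B := single (-n) 1 * (u : LaurentSeries B) with hv
  have hvcoeff : ∀ i : ℤ, v.coeff i = (u : LaurentSeries B).coeff (i + n) := by
    intro i
    have h := coeff_single_mul_add (r := (1 : B)) (x := (u : LaurentSeries B))
      (a := i + n) (b := -n)
    rw [one_mul, show i + n + -n = i from by omega] at h
    rw [hv, h]
  have hv0 : IsUnit (v.coeff 0) := by rw [hvcoeff 0, zero_add]; exact hnu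
  have hvneg : ∀ i : ℤ, i < 0 → v.coeff i ∈ (IsLocalRing.maximalIdeal B) ^ 1 := by
    intro i hi
    rw [pow_one, hvcoeff]
    exact hlow _ (by omega)
  obtain ⟨P, S, hP, hSneg, hS0, hfact⟩ := core hm hN N 1 le_rfl (by omega) v hv0 hvneg
  set c : Bˣ := hS0.unit with hc
  set Q : LaurentSeries B := single 0 ((c⁻¹ : Bˣ) : B) * S with hQdef
  have hScoeff : S.coeff 0 = (c : B) := hS0.unit_spec.symm
  have hQ0 : Q.coeff 0 = 1 := by
    rw [hQdef, coeff_single_zero_mul, hScoeff, Units.inv_mul]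
  have hQneg : ∀ i : ℤ, i < 0 → Q.coeff i = 0 := fun i hi => by
    rw [hQdef, coeff_single_zero_mul, hSneg i hi, mul_zero]
  have hSQ : S = single 0 ((c : Bˣ) : B) * Q := by
    ext i
    rw [coeff_single_zero_mul, hQdef, coeff_single_zero_mul, ← mul_assoc, Units.mul_inv, one_mul]
  have hufact : (u : LaurentSeries B) = single n ((c : Bˣ) : B) * P * Q := by
    have h1 : (u : LaurentSeries B) = single n (1 : B) * v := by
      rw [hv, ← mul_assoc, single_mul_single, mul_one, show n + -n = (0 : ℤ) from by omega,
        single_zero_mul_eq_smul, one_smul]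
    rw [h1, hfact, hSQ]
    have h2 : single n ((c : Bˣ) : B) = single n (1 : B) * single 0 ((c : Bˣ) : B) := by
      rw [single_mul_single, add_zero, one_mul]
    rw [h2]
    ring
  refine ⟨(n, c, P, Q), ⟨⟨hP.1, hP.2.1, fun i hi => mem_nilradical.mp (hP.2.2 i hi)⟩,
    ⟨hQ0, hQneg⟩, hufact⟩, ?_⟩
  rintro ⟨n', l', P', Q'⟩ ⟨⟨h1, h2, h3⟩, ⟨h4, h5⟩, h6⟩
  have hP' : Shaped P' := ⟨h1, h2, fun i hi => mem_nilradical.mpr (h3 i hi)⟩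
  have E : single n' (l' : B) * P' * Q' = single n ((c : Bˣ) : B) * P * Q := by
    rw [← h6, hufact]
  obtain ⟨e1, e2, e3, e4⟩ := uniq hP' ⟨hP.1, hP.2.1, hP.2.2⟩ h4 h5 hQ0 hQneg E
  exact Prod.ext e1 (Prod.ext e2 (Prod.ext e3 e4))
end

section
/- Let A be a commutative ring, and let a, b ∈ A with b nilpotent, say b^h = 0. Then for positive integers i, j, the element 1 - a^{j/(i,j)} b^{i/(i,j)} raised to the power (i,j) (where (i,j) = gcd(i,j)) is a unit in A, and moreover in the formal power series ring A⟦z⟧, the product ∏_{i≥1}(1 - aᵢ zⁱ) evaluated against finitely many factors (1 - b₋ⱼ z^{-j}) with b₋ⱼ nilpotent yields, after pairing, a well-defined unit of A: only finitely many of the terms (1 - aᵢ^{j/(i,j)} b₋ⱼ^{i/(i,j)})^{(i,j)} differ from 1. -/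
/-- Let `A` be a commutative ring and `b ∈ A` nilpotent. Then for positive integers
`i, j`, the element `(1 - a^{j/(i,j)} b^{i/(i,j)})^{(i,j)}` is a unit of `A`; moreover,
for a sequence `a : ℕ → A` and a nilpotent `b` with `b^r = 0`, only finitely many of
the terms `(1 - aᵢ^{j/(i,j)} b^{i/(i,j)})^{(i,j)}` differ from `1` (indeed
`i/(i,j) < r` forces `i < j·r`), so the doubly indexed product appearing in the
Contou-Carrère symbol is a finite product of units of `A`. -/
theorem contouCarrere_terms_unit_and_finite (A : Type*) [CommRing A] :
    (∀ (a b : A), IsNilpotent b → ∀ i j : ℕ, 0 < i → 0 < j →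
      IsUnit ((1 - a ^ (j / Nat.gcd i j) * b ^ (i / Nat.gcd i j)) ^ Nat.gcd i j)) ∧
    (∀ (a : ℕ → A) (b : A) (r j : ℕ), b ^ r = 0 → 0 < j →
      {i : ℕ | 0 < i ∧
        (1 - (a i) ^ (j / Nat.gcd i j) * b ^ (i / Nat.gcd i j)) ^ Nat.gcd i j ≠ 1}.Finite) ∧
    (∀ (r i j : ℕ), 0 < i → 0 < j → i / Nat.gcd i j < r → i < j * r) := by
  have key : ∀ (r i j : ℕ), 0 < i → 0 < j → i / Nat.gcd i j < r → i < j * r := by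
    intro r i j hi hj hlt
    have hg : 0 < Nat.gcd i j := Nat.gcd_pos_of_pos_left j hi
    have hd : Nat.gcd i j ∣ i := Nat.gcd_dvd_left i j
    have h1 : i = Nat.gcd i j * (i / Nat.gcd i j) := (Nat.mul_div_cancel' hd).symm
    calc i = Nat.gcd i j * (i / Nat.gcd i j) := h1
      _ < Nat.gcd i j * r := by
          exact Nat.mul_lt_mul_of_pos_left hlt hg
      _ ≤ j * r := Nat.mul_le_mul_right r (Nat.le_of_dvd hj (Nat.gcd_dvd_right i j))
  refine ⟨?_, ?_, key⟩
  · intro a b hb i j hi hj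
    have hpos : 0 < i / Nat.gcd i j :=
      Nat.div_pos (Nat.le_of_dvd hi (Nat.gcd_dvd_left i j)) (Nat.gcd_pos_of_pos_left j hi)
    have hnil : IsNilpotent (a ^ (j / Nat.gcd i j) * b ^ (i / Nat.gcd i j)) :=
      (Commute.all _ _).isNilpotent_mul_left (hb.pow_of_pos hpos.ne')
    exact (IsNilpotent.isUnit_one_sub hnil).pow _
  · intro a b r j hbr hj
    apply Set.Finite.subset (Set.finite_Iio (j * r))
    intro i hi
    obtain ⟨hip, hne⟩ := hi
    by_contra hge
    simp only [Set.mem_Iio, not_lt] at hge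
    have hdiv : r ≤ i / Nat.gcd i j := by
      by_contra h
      exact absurd (key r i j hip hj (lt_of_not_ge h)) (not_lt.mpr hge)
    have : b ^ (i / Nat.gcd i j) = 0 := by
      obtain ⟨k, hk⟩ := Nat.exists_eq_add_of_le hdiv
      rw [hk, pow_add, hbr, zero_mul]
    apply hne
    rw [this, mul_zero, sub_zero, one_pow]
end
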